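/- arXiv:1705.04735 — 12 statements merged into one kernel-verified Lean document; each statement's English description precedes it below -/
import Mathlib

section
/- Let G be a graph with no isolated vertex and H any graph. Then the weak Roman domination number of the lexicographic product satisfies γ_r(G∘H) ≤ 2·γ_t(G). -/
open Finset
open scoped Classical

/-- The lexicographic product of two simple graphs. -/
def lexProd {α β : Type*} (G : SimpleGraph α) (H : SimpleGraph β) :
    SimpleGraph (α × β) where
  Adj p q := G.Adj p.1 q.1 ∨ (p.1 = q.1 ∧ H.Adj p.2 q.2)
  symm := by
    constructor
    rintro ⟨a, b⟩ ⟨c, d⟩ (h | ⟨h1, h2⟩)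
    · exact Or.inl h.symm
    · exact Or.inr ⟨h1.symm, h2.symm⟩
  loopless := by
    constructor
    rintro ⟨a, b⟩ (h | ⟨h1, h2⟩)
    · exact G.irrefl h
    · exact H.irrefl h2

/-- A vertex `w` is undefended with respect to `g` if `g w = 0` and `g x = 0`
for every neighbour `x` of `w`. -/
def Undefended {α : Type*} (G : SimpleGraph α) (g : α → ℕ) (w : α) : Prop :=
  g w = 0 ∧ ∀ x, G.Adj w x → g x = 0

/-- A weak Roman dominating function. -/
def IsWRDF {α : Type*} (G : SimpleGraph α) (f : α → ℕ) : Prop :=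
  (∀ v, f v ≤ 2) ∧
    ∀ v, f v = 0 → ∃ u, G.Adj u v ∧ 1 ≤ f u ∧
      ∀ w, ¬ Undefended G (Function.update (Function.update f v 1) u (f u - 1)) w

/-- The weak Roman domination number. -/
noncomputable def weakRomanNumber {α : Type*} (G : SimpleGraph α) [Fintype α] : ℕ :=
  sInf {k | ∃ f : α → ℕ, IsWRDF G f ∧ ∑ v, f v = k}

/-- A dominating set. -/
def IsDomSet {α : Type*} (G : SimpleGraph α) (D : Finset α) : Prop :=
  ∀ v ∉ D, ∃ u ∈ D, G.Adj u v

/-- The domination number. -/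
noncomputable def domNumber {α : Type*} (G : SimpleGraph α) [Fintype α] : ℕ :=
  sInf {k | ∃ D : Finset α, IsDomSet G D ∧ D.card = k}

/-- A total dominating set. -/
def IsTotalDomSet {α : Type*} (G : SimpleGraph α) (S : Finset α) : Prop :=
  ∀ v, ∃ u ∈ S, G.Adj u v

/-- The total domination number. -/
noncomputable def totalDomNumber {α : Type*} (G : SimpleGraph α) [Fintype α] : ℕ :=
  sInf {k | ∃ S : Finset α, IsTotalDomSet G S ∧ S.card = k}

/-- A double total dominating set: every vertex has at least two neighbours in `S`. -/
def IsDoubleTotalDomSet {α : Type*} (G : SimpleGraph α) (S : Finset α) : Prop :=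
  ∀ v, ∃ u₁ ∈ S, ∃ u₂ ∈ S, u₁ ≠ u₂ ∧ G.Adj u₁ v ∧ G.Adj u₂ v

/-- The double total domination number. -/
noncomputable def doubleTotalDomNumber {α : Type*} (G : SimpleGraph α) [Fintype α] : ℕ :=
  sInf {k | ∃ S : Finset α, IsDoubleTotalDomSet G S ∧ S.card = k}

/-- A 2-packing: the closed neighbourhoods of distinct members are disjoint. -/
def IsTwoPacking {α : Type*} (G : SimpleGraph α) (X : Finset α) : Prop :=
  ∀ u ∈ X, ∀ v ∈ X, u ≠ v →
    ∀ w, ¬ ((w = u ∨ G.Adj u w) ∧ (w = v ∨ G.Adj v w))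

/-- The 2-packing number. -/
noncomputable def twoPackingNumber {α : Type*} (G : SimpleGraph α) [Fintype α] : ℕ :=
  sSup {k | ∃ X : Finset α, IsTwoPacking G X ∧ X.card = k}

/-- A secure dominating set. -/
def IsSecureDomSet {α : Type*} (G : SimpleGraph α) (S : Finset α) : Prop :=
  IsDomSet G S ∧ ∀ v ∉ S, ∃ u ∈ S, G.Adj u v ∧ IsDomSet G (insert v (S.erase u))

/-- The secure domination number. -/
noncomputable def secureDomNumber {α : Type*} (G : SimpleGraph α) [Fintype α] : ℕ :=
  sInf {k | ∃ S : Finset α, IsSecureDomSet G S ∧ S.card = k}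

/-- The corona product of two graphs. -/
def corona {α β : Type*} (G₁ : SimpleGraph α) (G₂ : SimpleGraph β) :
    SimpleGraph (α ⊕ α × β) where
  Adj x y :=
    match x, y with
    | .inl a, .inl a' => G₁.Adj a a'
    | .inl a, .inr p => a = p.1
    | .inr p, .inl a => p.1 = a
    | .inr p, .inr q => p.1 = q.1 ∧ G₂.Adj p.2 q.2
  symm := by
    constructor
    rintro (a | p) (a' | q) h
    · exact G₁.adj_symm h
    · exact h.symm
    · exact h.symm
    · exact ⟨h.1.symm, G₂.adj_symm h.2⟩
  loopless := by
    constructor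
    rintro (a | p) h
    · exact G₁.irrefl h
    · exact G₂.irrefl h.2


/-- If `G` has no isolated vertex, then
`γ_r(G∘H) ≤ 2·γ_t(G)`. -/
theorem weakRoman_lexProd_le_two_mul_totalDom {α β : Type*} [Fintype α] [Fintype β]
    (G : SimpleGraph α) (H : SimpleGraph β)
    (hG : ∀ v : α, ∃ u, G.Adj v u) :
    weakRomanNumber (lexProd G H) ≤ 2 * totalDomNumber G := by
  have hne : totalDomNumber G ∈ {k | ∃ S : Finset α, IsTotalDomSet G S ∧ S.card = k} := by
    apply Nat.sInf_mem
    refine ⟨(univ : Finset α).card, univ, ?_, rfl⟩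
    intro v; obtain ⟨u, hu⟩ := hG v; exact ⟨u, mem_univ u, hu.symm⟩
  obtain ⟨S, hS, hScard⟩ := hne
  obtain hβ | hβ := isEmpty_or_nonempty β
  · refine le_trans (Nat.sInf_le ?_) (Nat.zero_le _)
    exact ⟨fun _ => 0, ⟨fun v => by norm_num, fun v => isEmptyElim v.2⟩, by simp⟩
  · obtain ⟨b₀⟩ := hβ
    set f : α × β → ℕ := fun p => if p.1 ∈ S ∧ p.2 = b₀ then 2 else 0 with hf
    have hfU : ∀ u ∈ S, f (u, b₀) = 2 := fun u hu => if_pos ⟨hu, rfl⟩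
    have key : IsWRDF (lexProd G H) f := by
      constructor
      · intro v; dsimp only [f]; split <;> omega
      · intro v hv
        obtain ⟨u, huS, hadj⟩ := hS v.1
        refine ⟨(u, b₀), Or.inl hadj, ?_, ?_⟩
        · rw [hfU u huS]; omega
        · intro w hw
          obtain ⟨s, hsS, hsadj⟩ := hS w.1
          have hWv : (s, b₀) ≠ v := by
            intro h; rw [← h, hfU s hsS] at hv; omega
          have h0 := hw.2 (s, b₀) (Or.inl hsadj.symm)
          simp only [Function.update] at h0
          split_ifs at h0 with h1
          · simp only [eq_rec_constant] at h0
            rw [hfU u huS] at h0; omega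
          · rw [hfU s hsS] at h0; omega
    have hsum : ∑ p : α × β, f p = 2 * S.card := by
      rw [Fintype.sum_prod_type]
      have h1 : ∀ a, ∑ b : β, f (a, b) = if a ∈ S then 2 else 0 := by
        intro a
        simp only [f]
        by_cases ha : a ∈ S
        · simp [ha]
        · simp [ha]
      rw [Finset.sum_congr rfl fun a _ => h1 a]
      rw [Finset.sum_ite_mem, Finset.univ_inter, Finset.sum_const]
      ring
    calc weakRomanNumber (lexProd G H) ≤ 2 * S.card :=
          Nat.sInf_le ⟨f, key, by rw [hsum]⟩
      _ = 2 * totalDomNumber G := by rw [hScard]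
end

section
/- Let G be a graph of minimum degree at least two. Then: (i) γ_r(G) ≤ γ_{2,t}(G); (ii) for any graph H, γ_{2,t}(G∘H) ≤ γ_{2,t}(G); and (iii) for any graph H, γ_r(G∘H) ≤ γ_{2,t}(G). -/
open Finset
open scoped Classical

lemma wr_le_card_aux {α : Type*} [Fintype α] (G : SimpleGraph α) (S : Finset α)
    (hS : IsDoubleTotalDomSet G S) : weakRomanNumber G ≤ S.card := by
  apply Nat.sInf_le
  refine ⟨fun v => if v ∈ S then 1 else 0, ⟨fun v => by by_cases h : v ∈ S <;> simp [h], ?_⟩, ?_⟩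
  · intro v hv
    have hvS : v ∉ S := by by_contra h; simp [h] at hv
    obtain ⟨u₁, hu₁, u₂, hu₂, hne, ha₁, ha₂⟩ := hS v
    refine ⟨u₁, ha₁, by simp [hu₁], ?_⟩
    intro w hw
    obtain ⟨hw0, hwall⟩ := hw
    obtain ⟨x₁, hx₁, x₂, hx₂, hxne, hb₁, hb₂⟩ := hS w
    have hx : ∃ x, x ∈ S ∧ x ≠ u₁ ∧ G.Adj x w := by
      by_cases h : x₁ = u₁
      · exact ⟨x₂, hx₂, by rintro rfl; exact hxne h, hb₂⟩
      · exact ⟨x₁, hx₁, h, hb₁⟩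
    obtain ⟨x, hxS, hxu, hxa⟩ := hx
    have hxv : x ≠ v := fun h => hvS (h ▸ hxS)
    have hcontra := hwall x hxa.symm
    simp [Function.update_apply, hxu, hxv, hxS] at hcontra
  · simp [Finset.sum_ite_mem]

/-- If `G` has minimum degree at least two, then
(i) `γ_r(G) ≤ γ_{2,t}(G)`, (ii) `γ_{2,t}(G∘H) ≤ γ_{2,t}(G)` and
(iii) `γ_r(G∘H) ≤ γ_{2,t}(G)` for any graph `H`. -/
theorem weakRoman_and_doubleTotalDom_lexProd {α β : Type*} [Fintype α] [Fintype β]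
    (G : SimpleGraph α) (H : SimpleGraph β)
    (hG : ∀ v : α, ∃ u₁ u₂, u₁ ≠ u₂ ∧ G.Adj v u₁ ∧ G.Adj v u₂) :
    weakRomanNumber G ≤ doubleTotalDomNumber G ∧
    doubleTotalDomNumber (lexProd G H) ≤ doubleTotalDomNumber G ∧
    weakRomanNumber (lexProd G H) ≤ doubleTotalDomNumber G := by
  have hne : {k | ∃ S : Finset α, IsDoubleTotalDomSet G S ∧ S.card = k}.Nonempty := by
    refine ⟨Finset.univ.card, Finset.univ, ?_, rfl⟩
    intro v
    obtain ⟨u₁, u₂, hne, h1, h2⟩ := hG v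
    exact ⟨u₁, Finset.mem_univ _, u₂, Finset.mem_univ _, hne, h1.symm, h2.symm⟩
  obtain ⟨S, hS, hcard⟩ := Nat.sInf_mem hne
  have hS' : ∃ S' : Finset (α × β), IsDoubleTotalDomSet (lexProd G H) S' ∧
      S'.card ≤ S.card := by
    cases isEmpty_or_nonempty β with
    | inl h =>
      exact ⟨∅, fun v => (h.false v.2).elim, by simp⟩
    | inr h =>
      obtain ⟨b⟩ := h
      refine ⟨S.image (fun a => (a, b)), ?_, Finset.card_image_le⟩
      rintro ⟨a, c⟩
      obtain ⟨u₁, hu₁, u₂, hu₂, hneq, h1, h2⟩ := hS a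
      exact ⟨(u₁, b), Finset.mem_image_of_mem _ hu₁, (u₂, b),
        Finset.mem_image_of_mem _ hu₂, by simp [hneq], Or.inl h1, Or.inl h2⟩
  obtain ⟨S', hS'dom, hS'card⟩ := hS'
  refine ⟨?_, ?_, ?_⟩
  · rw [show doubleTotalDomNumber G = S.card from hcard.symm]
    exact wr_le_card_aux G S hS
  · calc doubleTotalDomNumber (lexProd G H) ≤ S'.card :=
          Nat.sInf_le ⟨S', hS'dom, rfl⟩
      _ ≤ S.card := hS'card
      _ = doubleTotalDomNumber G := hcard
  · calc weakRomanNumber (lexProd G H) ≤ S'.card := wr_le_card_aux _ S' hS'dom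
      _ ≤ S.card := hS'card
      _ = doubleTotalDomNumber G := hcard
end

section
/- For any graph H and any graph G of order n with minimum degree at least two, γ_r(G∘H) ≤ n. -/
open Finset
open scoped Classical

/-- For any graph `H` and any graph `G` of order `n` with minimum
degree at least two, `γ_r(G∘H) ≤ n`. -/
theorem weakRoman_lexProd_le_card {α β : Type*} [Fintype α] [Fintype β]
    (G : SimpleGraph α) (H : SimpleGraph β)
    (hG : ∀ v : α, ∃ u₁ u₂, u₁ ≠ u₂ ∧ G.Adj v u₁ ∧ G.Adj v u₂) :
    weakRomanNumber (lexProd G H) ≤ Fintype.card α := by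
  by_cases hβ : Nonempty β
  · obtain ⟨b⟩ := hβ
    refine Nat.sInf_le ⟨fun p => if p.2 = b then 1 else 0, ⟨?_, ?_⟩, ?_⟩
    · intro p; dsimp only; split <;> omega
    · intro v hv
      have hvb : v.2 ≠ b := by
        intro h; simp [h] at hv
      obtain ⟨a₁, a₂, hne, ha₁, ha₂⟩ := hG v.1
      refine ⟨(a₁, b), Or.inl ha₁.symm, by simp, ?_⟩
      intro w hw
      obtain ⟨hw0, hwn⟩ := hw
      have hvne : v ≠ ((a₁ : α), (b : β)) := by
        intro h; apply hvb; rw [h]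
      by_cases hwb : w.2 = b
      · by_cases hwa : w = ((a₁ : α), (b : β))
        · -- w = (a₁,b) has value 0 after move, but has a positive neighbour
          obtain ⟨c₁, c₂, hc, hc₁, hc₂⟩ := hG a₁
          have hadj : (lexProd G H).Adj w (c₁, b) := by
            rw [hwa]; exact Or.inl hc₁
          have h1 : ((c₁ : α), (b : β)) ≠ ((a₁ : α), (b : β)) := by
            intro h
            have hca : c₁ = a₁ := congrArg Prod.fst h
            exact G.irrefl (v := a₁) (hca ▸ hc₁)
          have h2 : ((c₁ : α), (b : β)) ≠ v := by
            intro h; apply hvb; rw [← h]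
          have h3 := hwn _ hadj
          simp [Function.update, h1, h2] at h3
        · -- w keeps value 1
          have h2 : w ≠ v := by
            intro h; apply hvb; rw [← h]; exact hwb
          simp [Function.update, hwa, h2, hwb] at hw0
      · by_cases hwv : w = v
        · -- w = v has new value 1
          subst hwv
          simp [Function.update, hvne] at hw0
        · -- w has a neighbour (cᵢ, b) ≠ (a₁, b), which keeps value 1
          obtain ⟨c₁, c₂, hc, hc₁, hc₂⟩ := hG w.1
          have hkey : ∀ c : α, G.Adj w.1 c → ((c : α), (b : β)) ≠ ((a₁ : α), (b : β)) → False := by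
            intro c hadjc hne'
            have hadj : (lexProd G H).Adj w (c, b) := Or.inl hadjc
            have h2 : ((c : α), (b : β)) ≠ v := by intro h; apply hvb; rw [← h]
            have h3 := hwn _ hadj
            simp [Function.update, hne', h2] at h3
          by_cases h1 : ((c₁ : α), (b : β)) = ((a₁ : α), (b : β))
          · apply hkey c₂ hc₂
            intro h2
            exact hc ((congrArg Prod.fst h1).trans (congrArg Prod.fst h2).symm)
          · exact hkey c₁ hc₁ h1
    · rw [Fintype.sum_prod_type]
      simp
  · have h0 : weakRomanNumber (lexProd G H) ≤ 0 := by
      apply Nat.sInf_le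
      exact ⟨fun _ => 0, ⟨fun v => Nat.zero_le 2, fun v => (hβ ⟨v.2⟩).elim⟩, by simp⟩
    omega
end

section
/- For any graph G of minimum degree δ ≥ 1 and any noncomplete graph H, γ_r(G∘H) ≥ max{γ_r(G), γ_t(G), 2·ρ(G)}. -/
open Finset
open scoped Classical

/-! ### Auxiliary lemmas -/

lemma pair_le_sum' {γ : Type*} {s : Finset γ} (g : γ → ℕ) {i j : γ} (hi : i ∈ s) (hj : j ∈ s)
    (hij : i ≠ j) : g i + g j ≤ ∑ x ∈ s, g x := by
  have h1 : g i ≤ ∑ x ∈ s.erase j, g x :=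
    Finset.single_le_sum (fun _ _ => Nat.zero_le _) (Finset.mem_erase.mpr ⟨hij, hi⟩)
  have h2 : ∑ x ∈ s.erase j, g x + g j = ∑ x ∈ s, g x := Finset.sum_erase_add s g hj
  omega

lemma term_le_sum' {γ : Type*} [Fintype γ] (g : γ → ℕ) (c : γ) : g c ≤ ∑ x : γ, g x :=
  Finset.single_le_sum (fun _ _ => Nat.zero_le _) (mem_univ c)

lemma term_le_sum_fin {γ : Type*} {s : Finset γ} (g : γ → ℕ) {p : γ} (hp : p ∈ s) :
    g p ≤ ∑ x ∈ s, g x :=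
  Finset.single_le_sum (fun _ _ => Nat.zero_le _) hp

lemma upd_ne {γ δ : Type*} {inst : DecidableEq γ} {b a : γ} (f : γ → δ) (v : δ) (h : b ≠ a) :
    @Function.update γ (fun _ => δ) inst f a v b = f b :=
  @Function.update_of_ne γ (fun _ => δ) inst b a h v f

lemma upd_same {γ δ : Type*} {inst : DecidableEq γ} (a : γ) (v : δ) (f : γ → δ) :
    @Function.update γ (fun _ => δ) inst f a v a = v :=
  @Function.update_self γ (fun _ => δ) inst a v f

/-- The closed neighbourhood of a vertex as a finset. -/
noncomputable def cnbhd {α : Type*} [Fintype α] (G : SimpleGraph α) (u : α) : Finset α :=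
  univ.filter (fun p => p = u ∨ G.Adj u p)

lemma mem_cnbhd {α : Type*} [Fintype α] (G : SimpleGraph α) (u p : α) :
    p ∈ cnbhd G u ↔ (p = u ∨ G.Adj u p) := by simp [cnbhd]

/-- Key lemma: for any WRDF on `G∘H` with `H` noncomplete, the total weight on the
copies of `H` corresponding to a closed neighbourhood of `G` is at least 2. -/
lemma key_two_le {α β : Type*} [Fintype α] [Fintype β] (G : SimpleGraph α) (H : SimpleGraph β)
    (hH : ∃ a b : β, a ≠ b ∧ ¬ H.Adj a b) {f : α × β → ℕ}
    (hf : IsWRDF (lexProd G H) f) (u : α) :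
    2 ≤ ∑ p ∈ cnbhd G u, ∑ c : β, f (p, c) := by
  by_contra hcon
  have ht : ∑ p ∈ cnbhd G u, ∑ c : β, f (p, c) ≤ 1 := by omega
  have huN : u ∈ cnbhd G u := (mem_cnbhd G u u).mpr (Or.inl rfl)
  have innerbd : ∀ p ∈ cnbhd G u, (∑ c : β, f (p, c)) ≤ 1 := fun p hp =>
    le_trans (term_le_sum_fin (fun p => ∑ c : β, f (p, c)) hp) ht
  have pairbd : ∀ p c x y, p ∈ cnbhd G u → x ∈ cnbhd G u → (p, c) ≠ (x, y) →
      f (p, c) + f (x, y) ≤ 1 := by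
    intro p c x y hp hx hne
    by_cases hpx : p = x
    · subst hpx
      have hcy : c ≠ y := fun h => hne (by rw [h])
      have h1 : f (p, c) + f (p, y) ≤ ∑ c : β, f (p, c) :=
        pair_le_sum' (fun c => f (p, c)) (mem_univ c) (mem_univ y) hcy
      have h2 := innerbd p hp
      omega
    · have h0 : (∑ c : β, f (p, c)) + (∑ c : β, f (x, c)) ≤
          ∑ q ∈ cnbhd G u, ∑ c : β, f (q, c) :=
        pair_le_sum' (fun p => ∑ c : β, f (p, c)) hp hx hpx
      have h1 : f (p, c) ≤ ∑ c : β, f (p, c) := term_le_sum' (fun c => f (p, c)) c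
      have h2 : f (x, y) ≤ ∑ c : β, f (x, c) := term_le_sum' (fun c => f (x, c)) y
      omega
  have main : ∀ a b : β, a ≠ b → ¬ H.Adj a b → f (u, a) = 0 → False := by
    intro a b hab hnadj h0
    obtain ⟨d, hadj, hd1, hmove⟩ := hf.2 (u, a) h0
    obtain ⟨x, y⟩ := d
    have hadj' : G.Adj x u ∨ (x = u ∧ H.Adj y a) := hadj
    have hxN : x ∈ cnbhd G u := by
      rcases hadj' with h | ⟨h, _⟩
      · exact (mem_cnbhd G u x).mpr (Or.inr h.symm)
      · exact (mem_cnbhd G u x).mpr (Or.inl h)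
    have mass : ∀ p c, p ∈ cnbhd G u → (p, c) ≠ (x, y) → f (p, c) = 0 := by
      intro p c hp hne
      have := pairbd p c x y hp hxN hne
      omega
    have hne2 : (x, y) ≠ (u, b) := by
      intro h
      rw [Prod.mk.injEq] at h
      obtain ⟨h1, h2⟩ := h
      subst h1; subst h2
      rcases hadj' with h | ⟨_, h⟩
      · exact G.irrefl h
      · exact hnadj h.symm
    have fxy : f (x, y) = 1 := by
      have h1 : f (x, y) ≤ ∑ c : β, f (x, c) := term_le_sum' (fun c => f (x, c)) y
      have h2 := innerbd x hxN
      omega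
    refine hmove (u, b) ⟨?_, ?_⟩
    · rw [upd_ne _ _ (Ne.symm hne2),
        upd_ne _ _ (fun h => hab ((congrArg Prod.snd h).symm))]
      exact mass u b huN (Ne.symm hne2)
    · rintro ⟨p, q⟩ hpq
      have hpq' : G.Adj u p ∨ (u = p ∧ H.Adj b q) := hpq
      have hpN : p ∈ cnbhd G u := by
        rcases hpq' with h | ⟨h, _⟩
        · exact (mem_cnbhd G u p).mpr (Or.inr h)
        · exact (mem_cnbhd G u p).mpr (Or.inl h.symm)
      by_cases hz1 : (p, q) = (x, y)
      · rw [hz1, upd_same, fxy]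
      · rw [upd_ne _ _ hz1]
        by_cases hz2 : (p, q) = (u, a)
        · exfalso
          rw [Prod.mk.injEq] at hz2
          obtain ⟨h1, h2⟩ := hz2
          subst h1; subst h2
          rcases hpq' with h | ⟨_, h⟩
          · exact G.irrefl h
          · exact hnadj h.symm
        · rw [upd_ne _ _ hz2]
          exact mass p q hpN hz1
  obtain ⟨a, b, hab, hnadj⟩ := hH
  by_cases ha : f (u, a) = 0
  · exact main a b hab hnadj ha
  · have hb : f (u, b) = 0 := by
      have hne : ((u, b) : α × β) ≠ (u, a) := fun h => hab ((congrArg Prod.snd h).symm)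
      have := pairbd u b u a huN huN hne
      omega
    exact main b a hab.symm (fun h => hnadj h.symm) hb

/-- Capping copy weights at 2 gives a WRDF on `G`. -/
lemma wrdf_min {α β : Type*} [Fintype α] [Fintype β] (G : SimpleGraph α) (H : SimpleGraph β)
    (hH : ∃ a b : β, a ≠ b ∧ ¬ H.Adj a b) {f : α × β → ℕ}
    (hf : IsWRDF (lexProd G H) f) :
    IsWRDF G (fun u => min (∑ c : β, f (u, c)) 2) := by
  obtain ⟨a, b, hab, hnadj⟩ := hH
  refine ⟨fun v => min_le_right _ _, ?_⟩
  intro v hv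
  have hv' : min (∑ c : β, f (v, c)) 2 = 0 := hv
  have hwv : ∑ c : β, f (v, c) = 0 := by omega
  have hzero : ∀ c, f (v, c) = 0 := by
    intro c
    have : f (v, c) ≤ ∑ c : β, f (v, c) := term_le_sum' (fun c => f (v, c)) c
    omega
  obtain ⟨d, hadj, hd1, hmove⟩ := hf.2 (v, a) (hzero a)
  obtain ⟨x, y⟩ := d
  have hadj' : G.Adj x v ∨ (x = v ∧ H.Adj y a) := hadj
  have hGxv : G.Adj x v := by
    rcases hadj' with h | ⟨h, _⟩
    · exact h
    · exfalso; subst h; rw [hzero y] at hd1; omega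
  have hwx1 : 1 ≤ ∑ c : β, f (x, c) :=
    le_trans hd1 (term_le_sum' (fun c => f (x, c)) y)
  refine ⟨x, hGxv, le_min hwx1 one_le_two, ?_⟩
  intro z hz
  obtain ⟨hz0, hznb⟩ := hz
  have hxv : x ≠ v := G.ne_of_adj hGxv
  set g : α → ℕ := fun u => min (∑ c : β, f (u, c)) 2 with hg
  have hg'v : Function.update (Function.update g v 1) x (g x - 1) v = 1 := by
    rw [upd_ne _ _ (Ne.symm hxv), upd_same]
  have hzv : z ≠ v := by intro h; rw [h, hg'v] at hz0; omega
  by_cases hzx : z = x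
  · have := hznb v (hzx ▸ hGxv)
    rw [hg'v] at this; omega
  · have hgz : g z = 0 := by
      rw [upd_ne _ _ hzx, upd_ne _ _ hzv] at hz0
      exact hz0
    have hwz : ∑ c : β, f (z, c) = 0 := by
      simp only [hg] at hgz; omega
    have hzzero : ∀ c, f (z, c) = 0 := by
      intro c
      have : f (z, c) ≤ ∑ c : β, f (z, c) := term_le_sum' (fun c => f (z, c)) c
      omega
    refine hmove (z, a) ⟨?_, ?_⟩
    · rw [upd_ne _ _ (fun h => hzx (congrArg Prod.fst h)),
        upd_ne _ _ (fun h => hzv (congrArg Prod.fst h))]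
      exact hzzero a
    · rintro ⟨p, q⟩ hpq
      have hpq' : G.Adj z p ∨ (z = p ∧ H.Adj a q) := hpq
      rcases hpq' with hGzp | ⟨hzp, _⟩
      · have hp0 : Function.update (Function.update g v 1) x (g x - 1) p = 0 := hznb p hGzp
        have hpv : p ≠ v := by intro h; rw [h, hg'v] at hp0; omega
        by_cases hpx : p = x
        · subst hpx
          have hgx0 : g p - 1 = 0 := by rw [upd_same] at hp0; exact hp0
          have hwx : (∑ c : β, f (p, c)) = 1 := by
            simp only [hg] at hgx0; omega
          by_cases hqy : q = y
          · subst hqy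
            rw [upd_same]
            have hfy : f (p, q) ≤ 1 := by
              have : f (p, q) ≤ ∑ c : β, f (p, c) := term_le_sum' (fun c => f (p, c)) q
              omega
            omega
          · rw [upd_ne _ _ (fun h => hqy (congrArg Prod.snd h)),
              upd_ne _ _ (fun h => hpv (congrArg Prod.fst h))]
            have : f (p, q) + f (p, y) ≤ ∑ c : β, f (p, c) :=
              pair_le_sum' (fun c => f (p, c)) (mem_univ q) (mem_univ y) hqy
            omega
        · have hgp : g p = 0 := by
            rw [upd_ne _ _ hpx, upd_ne _ _ hpv] at hp0
            exact hp0
          have hwp : ∑ c : β, f (p, c) = 0 := by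
            simp only [hg] at hgp; omega
          rw [upd_ne _ _ (fun h => hpx (congrArg Prod.fst h)),
            upd_ne _ _ (fun h => hpv (congrArg Prod.fst h))]
          have : f (p, q) ≤ ∑ c : β, f (p, c) := term_le_sum' (fun c => f (p, c)) q
          omega
      · subst hzp
        rw [upd_ne _ _ (fun h => hzx (congrArg Prod.fst h)),
          upd_ne _ _ (fun h => hzv (congrArg Prod.fst h))]
        exact hzzero q

/-- For any graph `G` of minimum degree at least one and any
noncomplete graph `H`, `γ_r(G∘H) ≥ max{γ_r(G), γ_t(G), 2·ρ(G)}`. -/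
theorem weakRoman_lexProd_lower_bound {α β : Type*} [Fintype α] [Fintype β]
    (G : SimpleGraph α) (H : SimpleGraph β)
    (hG : ∀ v : α, ∃ u, G.Adj v u)
    (hH : ∃ a b : β, a ≠ b ∧ ¬ H.Adj a b) :
    max (weakRomanNumber G) (max (totalDomNumber G) (2 * twoPackingNumber G)) ≤
      weakRomanNumber (lexProd G H) := by
  classical
  have hne : Set.Nonempty {k | ∃ f : α × β → ℕ, IsWRDF (lexProd G H) f ∧ ∑ v, f v = k} := by
    refine ⟨∑ _v : α × β, (2 : ℕ), fun _ => 2, ⟨fun _ => le_rfl, ?_⟩, rfl⟩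
    intro v hv; simp at hv
  have hmem : ∃ f : α × β → ℕ, IsWRDF (lexProd G H) f ∧
      ∑ v, f v = weakRomanNumber (lexProd G H) := Nat.sInf_mem hne
  obtain ⟨f, hf, hsum⟩ := hmem
  set w : α → ℕ := fun u => ∑ c : β, f (u, c) with hw
  have hksum : ∑ u : α, w u = weakRomanNumber (lexProd G H) := by
    rw [← hsum]
    exact (Fintype.sum_prod_type f).symm
  have hkey : ∀ u, 2 ≤ ∑ p ∈ cnbhd G u, w p := fun u => key_two_le G H hH hf u
  refine max_le ?_ (max_le ?_ ?_)
  · -- weak Roman domination bound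
    have hg : IsWRDF G (fun u => min (w u) 2) := wrdf_min G H hH hf
    have h1 : weakRomanNumber G ≤ ∑ u : α, min (w u) 2 := Nat.sInf_le ⟨_, hg, rfl⟩
    refine le_trans h1 ?_
    rw [← hksum]
    exact Finset.sum_le_sum (fun u _ => min_le_left _ _)
  · -- total domination bound
    choose nb hnb using hG
    set S : Finset α := univ.filter (fun u => 1 ≤ w u) with hS
    set B : Finset α := univ.filter (fun u => ∀ x, G.Adj u x → w x = 0) with hB
    have hBw : ∀ u ∈ B, 2 ≤ w u := by
      intro u hu
      have h2 := hkey u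
      have heq : ∑ p ∈ cnbhd G u, w p = w u := by
        apply Finset.sum_eq_single
        · intro p hp hpu
          rcases (mem_cnbhd G u p).mp hp with h | h
          · exact absurd h hpu
          · exact (mem_filter.mp hu).2 p h
        · intro hu'
          exact absurd ((mem_cnbhd G u u).mpr (Or.inl rfl)) hu'
      omega
    have hBS : B ⊆ S := by
      intro u hu
      exact mem_filter.mpr ⟨mem_univ u, by have := hBw u hu; omega⟩
    set T : Finset α := S ∪ B.image nb with hT
    have hTdom : IsTotalDomSet G T := by
      intro v
      by_cases hc : ∃ x, G.Adj v x ∧ 1 ≤ w x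
      · obtain ⟨x, hadj, hx⟩ := hc
        exact ⟨x, mem_union_left _ (mem_filter.mpr ⟨mem_univ x, hx⟩), hadj.symm⟩
      · push_neg at hc
        have hvB : v ∈ B :=
          mem_filter.mpr ⟨mem_univ v, fun x hx => by have := hc x hx; omega⟩
        exact ⟨nb v, mem_union_right _ (mem_image.mpr ⟨v, hvB, rfl⟩), (hnb v).symm⟩
    have hcard : T.card ≤ ∑ u : α, w u := by
      have h1 : T.card ≤ S.card + B.card :=
        le_trans (card_union_le _ _) (Nat.add_le_add_left Finset.card_image_le _)
      have h2 : ∑ u ∈ S \ B, w u + ∑ u ∈ B, w u = ∑ u ∈ S, w u := Finset.sum_sdiff hBS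
      have h3 : (S \ B).card ≤ ∑ u ∈ S \ B, w u := by
        calc (S \ B).card = ∑ _u ∈ S \ B, 1 := by simp
        _ ≤ _ := Finset.sum_le_sum
            (fun u hu => (mem_filter.mp (Finset.mem_sdiff.mp hu).1).2)
      have h4 : 2 * B.card ≤ ∑ u ∈ B, w u := by
        calc 2 * B.card = ∑ _u ∈ B, 2 := by rw [Finset.sum_const, smul_eq_mul, mul_comm]
        _ ≤ _ := Finset.sum_le_sum (fun u hu => hBw u hu)
      have h5 : ∑ u ∈ S, w u ≤ ∑ u : α, w u :=
        Finset.sum_le_sum_of_subset (subset_univ S)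
      have h6 : (S \ B).card = S.card - B.card := Finset.card_sdiff_of_subset hBS
      have h7 : B.card ≤ S.card := Finset.card_le_card hBS
      omega
    have h0 : totalDomNumber G ≤ T.card := Nat.sInf_le ⟨T, hTdom, rfl⟩
    exact le_trans h0 (hcard.trans (le_of_eq hksum))
  · -- 2-packing bound
    have hPne : Set.Nonempty {k | ∃ X : Finset α, IsTwoPacking G X ∧ X.card = k} :=
      ⟨0, ∅, fun u hu => absurd hu (Finset.notMem_empty u), Finset.card_empty⟩
    have hPbdd : BddAbove {k | ∃ X : Finset α, IsTwoPacking G X ∧ X.card = k} := by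
      refine ⟨Fintype.card α, ?_⟩
      rintro k ⟨X, _, rfl⟩
      exact Finset.card_le_univ X
    have hmem2 : ∃ X : Finset α, IsTwoPacking G X ∧ X.card = twoPackingNumber G :=
      Nat.sSup_mem hPne hPbdd
    obtain ⟨X, hX, hXc⟩ := hmem2
    rw [← hXc, ← hksum]
    have hdisj : (X : Set α).PairwiseDisjoint (cnbhd G) := by
      intro x hx y hy hxy
      simp only [Function.onFun]
      rw [Finset.disjoint_left]
      intro a hax hay
      exact hX x (Finset.mem_coe.mp hx) y (Finset.mem_coe.mp hy) hxy a
        ⟨(mem_cnbhd G x a).mp hax, (mem_cnbhd G y a).mp hay⟩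
    calc 2 * X.card = ∑ _x ∈ X, 2 := by rw [Finset.sum_const, smul_eq_mul, mul_comm]
    _ ≤ ∑ x ∈ X, ∑ p ∈ cnbhd G x, w p := Finset.sum_le_sum (fun x _ => hkey x)
    _ = ∑ p ∈ X.biUnion (cnbhd G), w p := (Finset.sum_biUnion hdisj).symm
    _ ≤ ∑ u : α, w u := Finset.sum_le_sum_of_subset (subset_univ _)
end

section
/- Let G be a graph and H a noncomplete graph. For any vertex u ∈ V(G) and any weak Roman dominating function f on G∘H of minimum weight (a γ_r(G∘H)-function), the total weight assigned by f to the copies of H indexed by the closed neighbourhood of u is at least 2, i.e. Σ_{x ∈ N[u]} Σ_{v∈V(H)} f(x,v) ≥ 2. -/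
open Finset
open scoped Classical

/-- For any vertex `u` of `G` and any `γ_r(G∘H)`-function `f`
(`H` noncomplete), the total weight that `f` assigns to the copies of `H`
indexed by the closed neighbourhood of `u` is at least `2`. -/
theorem weakRoman_lexProd_closedNbhd_weight {α β : Type*} [Fintype α] [Fintype β]
    (G : SimpleGraph α) (H : SimpleGraph β)
    (hH : ∃ a b : β, a ≠ b ∧ ¬ H.Adj a b)
    (u : α) (f : α × β → ℕ)
    (hf : IsWRDF (lexProd G H) f)
    (hmin : ∑ p, f p = weakRomanNumber (lexProd G H)) :
    2 ≤ ∑ x ∈ Finset.univ.filter (fun x => x = u ∨ G.Adj u x), ∑ v, f (x, v) := by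
  by_contra hlt
  push_neg at hlt
  obtain ⟨a, b, hab, hnadj⟩ := hH
  set R : Finset (α × β) :=
    (Finset.univ.filter (fun x => x = u ∨ G.Adj u x)) ×ˢ Finset.univ with hR
  have hsum : ∑ p ∈ R, f p
      = ∑ x ∈ Finset.univ.filter (fun x => x = u ∨ G.Adj u x), ∑ v, f (x, v) := by
    rw [hR, Finset.sum_product]
  have hmemR : ∀ p : α × β, p ∈ R ↔ (p.1 = u ∨ G.Adj u p.1) := by
    intro p; simp [hR]
  have huaR : ((u, a) : α × β) ∈ R := (hmemR _).2 (Or.inl rfl)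
  have hubR : ((u, b) : α × β) ∈ R := (hmemR _).2 (Or.inl rfl)
  have hadjR : ∀ (y : β) (q : α × β), (lexProd G H).Adj q (u, y) → q ∈ R := by
    rintro y q (h | ⟨h1, h2⟩)
    · exact (hmemR q).2 (Or.inr h.symm)
    · exact (hmemR q).2 (Or.inl h1)
  have hS : ∑ p ∈ R, f p ≤ 1 := by omega
  rcases Nat.le_one_iff_eq_zero_or_eq_one.mp hS with h0 | h1
  · -- total weight on region is 0 : (u,a) has no defender
    have hz : ∀ p ∈ R, f p = 0 := Finset.sum_eq_zero_iff.mp h0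
    obtain ⟨q, hadj, hq1, _⟩ := hf.2 (u, a) (hz _ huaR)
    have := hz q (hadjR a q hadj)
    omega
  · -- total weight is 1 : unique vertex w₀ of weight 1
    obtain ⟨w₀, hw₀R, hw₀pos⟩ : ∃ w₀ ∈ R, f w₀ ≠ 0 := by
      by_contra hc
      push_neg at hc
      rw [Finset.sum_eq_zero hc] at h1
      omega
    have hsplit : f w₀ + ∑ p ∈ R.erase w₀, f p = 1 := by
      rw [Finset.add_sum_erase _ _ hw₀R]; exact h1
    have hfw₀ : f w₀ = 1 := by omega
    have hrest : ∀ p ∈ R, p ≠ w₀ → f p = 0 := by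
      intro p hp hpne
      have h0' : ∑ q ∈ R.erase w₀, f q = 0 := by omega
      exact Finset.sum_eq_zero_iff.mp h0' p (Finset.mem_erase.mpr ⟨hpne, hp⟩)
    -- the only possible defender of any (u, y) is w₀
    have hdef : ∀ y : β, f (u, y) = 0 →
        (lexProd G H).Adj w₀ (u, y) ∧
        ∀ w, ¬ Undefended (lexProd G H)
          (Function.update (Function.update f (u, y) 1) w₀ (f w₀ - 1)) w := by
      intro y hy
      obtain ⟨q, hadj, hq1, hno⟩ := hf.2 (u, y) hy
      have hqR := hadjR y q hadj
      have hq : w₀ = q := by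
        by_contra hne
        have := hrest q hqR (fun h => hne h.symm)
        omega
      subst hq
      refine ⟨hadj, fun w hw => hno w ?_⟩
      convert hw using 2
      ext z
      rcases eq_or_ne z w₀ with rfl | hz
      · simp [Function.update]
      · rcases eq_or_ne z (u, y) with rfl | hz2
        · simp [Function.update, hz]
        · simp [Function.update, hz, hz2]
    by_cases hwa : w₀ = (u, a)
    · -- defender of (u,b) would be (u,a), not adjacent
      have hfb : f (u, b) = 0 := by
        apply hrest _ hubR
        rw [hwa]; intro h; exact hab (Prod.ext_iff.mp h).2.symm
      obtain ⟨hadj, -⟩ := hdef b hfb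
      rw [hwa] at hadj
      rcases hadj with h | ⟨-, h⟩
      · exact G.irrefl h
      · exact hnadj h
    by_cases hwb : w₀ = (u, b)
    · have hfa : f (u, a) = 0 := by
        apply hrest _ huaR
        rw [hwb]; intro h; exact hab (Prod.ext_iff.mp h).2
      obtain ⟨hadj, -⟩ := hdef a hfa
      rw [hwb] at hadj
      rcases hadj with h | ⟨-, h⟩
      · exact G.irrefl h
      · exact hnadj h.symm
    · -- w₀ is neither (u,a) nor (u,b) : (u,b) becomes undefended
      have hfa : f (u, a) = 0 := hrest _ huaR (fun h => hwa h.symm)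
      obtain ⟨hadj, hno⟩ := hdef a hfa
      apply hno (u, b)
      constructor
      · rw [Function.update_of_ne (fun h => hwb (by rw [h])),
          Function.update_of_ne (fun h => hab (Prod.ext_iff.mp h).2.symm)]
        exact hrest _ hubR (fun h => hwb h.symm)
      · intro x hx
        have hxR : x ∈ R := hadjR b x ((lexProd G H).adj_symm hx)
        by_cases hxw : x = w₀
        · rw [hxw, Function.update_self, hfw₀]
        · have hxa : x ≠ (u, a) := by
            intro h
            subst h
            rcases hx with h | ⟨-, h⟩
            · exact G.irrefl h
            · exact hnadj h.symm
          rw [Function.update_of_ne hxw, Function.update_of_ne hxa]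
          exact hrest x hxR hxw
end

section
/- For any graph G and any integer n ≥ 1, γ_r(G∘K_n) = γ_r(G), where K_n is the complete graph on n vertices. -/
open Finset
open scoped Classical

lemma wr_pair_le_sum {β : Type*} [Fintype β] (F : β → ℕ) {a b : β} (h : a ≠ b) :
    F a + F b ≤ ∑ v, F v := by
  rw [← Finset.sum_pair h]
  exact Finset.sum_le_sum_of_subset (Finset.subset_univ _)

lemma wr_push {α : Type*} [Fintype α] (G : SimpleGraph α) {n : ℕ} (hn : 1 ≤ n)
    {f : α → ℕ} (hf : IsWRDF G f) :
    ∃ F : α × Fin n → ℕ, IsWRDF (lexProd G (⊤ : SimpleGraph (Fin n))) F ∧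
      ∑ p, F p = ∑ v, f v := by
  set z : Fin n := ⟨0, hn⟩ with hz
  set F : α × Fin n → ℕ := fun p => if p.2 = z then f p.1 else 0 with hFdef
  have hFval : ∀ a b, F (a, b) = if b = z then f a else 0 := fun a b => rfl
  refine ⟨F, ⟨?_, ?_⟩, ?_⟩
  · intro p
    by_cases h : p.2 = z <;> simp [hFdef, h, hf.1 p.1]
  · rintro ⟨u, b⟩ hub
    by_cases h1 : f u = 0
    · -- Case A : defender comes from a neighbouring fibre
      obtain ⟨c, hcu, hc1, hno⟩ := hf.2 u h1
      have hcune : c ≠ u := hcu.ne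
      have hFcz : F (c, z) = f c := by simp [hFval]
      have hneub : ((u, b) : α × Fin n) ≠ (c, z) :=
        fun h => hcune (congrArg Prod.fst h).symm
      refine ⟨(c, z), Or.inl hcu, by rw [hFcz]; exact hc1, ?_⟩
      rintro ⟨a, b'⟩ ⟨hw0, hwn⟩
      simp only [Function.update_apply] at hw0 hwn
      rcases eq_or_ne a u with rfl | hau
      · -- now the old u is named a
        by_cases hb : b' = b
        · subst hb
          rw [if_neg hneub, if_pos rfl] at hw0
          exact one_ne_zero hw0
        · have h' := hwn (a, b) (Or.inr ⟨rfl, by simpa using hb⟩)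
          rw [if_neg hneub, if_pos rfl] at h'
          exact one_ne_zero h'
      · have hnu := hno a
        unfold Undefended at hnu
        push_neg at hnu
        simp only [Function.update_apply] at hnu
        obtain ⟨x, hax, hx⟩ := hnu (by
          rcases eq_or_ne a c with rfl | hac
          · rw [if_pos rfl]
            by_cases hb : b' = z
            · subst hb
              rw [if_pos rfl, hFcz] at hw0
              exact hw0
            · have h' := hwn (a, z) (Or.inr ⟨rfl, by simpa using hb⟩)
              rw [if_pos rfl, hFcz] at h'
              exact h'
          · rw [if_neg hac, if_neg hau]
            have hne1 : ((a, z) : α × Fin n) ≠ (c, z) :=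
              fun h => hac (congrArg Prod.fst h)
            have hne2 : ((a, z) : α × Fin n) ≠ (u, b) :=
              fun h => hau (congrArg Prod.fst h)
            by_cases hb : b' = z
            · subst hb
              rw [if_neg hne1, if_neg hne2] at hw0
              simpa [hFval] using hw0
            · have h' := hwn (a, z) (Or.inr ⟨rfl, by simpa using hb⟩)
              rw [if_neg hne1, if_neg hne2] at h'
              simpa [hFval] using h')
        rcases eq_or_ne x u with rfl | hxu
        · have h' := hwn (x, b) (Or.inl hax)
          rw [if_neg hneub, if_pos rfl] at h'
          exact one_ne_zero h'
        · rcases eq_or_ne x c with rfl | hxc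
          · rw [if_pos rfl] at hx
            have h' := hwn (x, z) (Or.inl hax)
            rw [if_pos rfl, hFcz] at h'
            exact hx h'
          · rw [if_neg hxc, if_neg hxu] at hx
            have h' := hwn (x, z) (Or.inl hax)
            rw [if_neg (show ((x, z) : α × Fin n) ≠ (c, z) from
                  fun h => hxc (congrArg Prod.fst h)),
                if_neg (show ((x, z) : α × Fin n) ≠ (u, b) from
                  fun h => hxu (congrArg Prod.fst h))] at h'
            exact hx (by simpa [hFval] using h')
    · -- Case B : defender inside the fibre
      have hbz : b ≠ z := by
        intro h; rw [hFval, if_pos h] at hub; exact h1 hub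
      have hne_b_z : ((u, b) : α × Fin n) ≠ (u, z) :=
        fun h => hbz (congrArg Prod.snd h)
      refine ⟨(u, z), Or.inr ⟨rfl, by simpa using Ne.symm hbz⟩, ?_, ?_⟩
      · rw [hFval, if_pos rfl]; omega
      rintro ⟨a, b'⟩ ⟨hw0, hwn⟩
      simp only [Function.update_apply] at hw0 hwn
      rcases eq_or_ne a u with rfl | hau
      · by_cases hb : b' = b
        · subst hb
          rw [if_neg hne_b_z, if_pos rfl] at hw0
          exact one_ne_zero hw0
        · have h' := hwn (a, b) (Or.inr ⟨rfl, by simpa using hb⟩)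
          rw [if_neg hne_b_z, if_pos rfl] at h'
          exact one_ne_zero h'
      · have hfa : f a = 0 := by
          have hne1 : ((a, z) : α × Fin n) ≠ (u, z) :=
            fun h => hau (congrArg Prod.fst h)
          have hne2 : ((a, z) : α × Fin n) ≠ (u, b) :=
            fun h => hau (congrArg Prod.fst h)
          by_cases hb : b' = z
          · subst hb
            rw [if_neg hne1, if_neg hne2] at hw0
            simpa [hFval] using hw0
          · have h' := hwn (a, z) (Or.inr ⟨rfl, by simpa using hb⟩)
            rw [if_neg hne1, if_neg hne2] at h'
            simpa [hFval] using h'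
        obtain ⟨c, hca, hc1, -⟩ := hf.2 a hfa
        rcases eq_or_ne c u with rfl | hcu
        · have h' := hwn (c, b) (Or.inl hca.symm)
          rw [if_neg hne_b_z, if_pos rfl] at h'
          exact one_ne_zero h'
        · have h' := hwn (c, z) (Or.inl hca.symm)
          rw [if_neg (show ((c, z) : α × Fin n) ≠ (u, z) from
                fun h => hcu (congrArg Prod.fst h)),
              if_neg (show ((c, z) : α × Fin n) ≠ (u, b) from
                fun h => hcu (congrArg Prod.fst h))] at h'
          have : f c = 0 := by simpa [hFval] using h'
          omega
  · rw [Fintype.sum_prod_type]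
    simp [hFdef]

lemma wr_pull {α : Type*} [Fintype α] (G : SimpleGraph α) {n : ℕ} (hn : 1 ≤ n)
    {F : α × Fin n → ℕ}
    (hF : IsWRDF (lexProd G (⊤ : SimpleGraph (Fin n))) F) :
    ∃ f : α → ℕ, IsWRDF G f ∧ ∑ v, f v ≤ ∑ p, F p := by
  set z : Fin n := ⟨0, hn⟩ with hz
  set f : α → ℕ := fun u => min (∑ v, F (u, v)) 2 with hfdef
  have hfval : ∀ u, f u = min (∑ v, F (u, v)) 2 := fun u => rfl
  refine ⟨f, ⟨fun v => min_le_right _ _, ?_⟩, ?_⟩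
  · intro u hu
    have hsu : ∑ v, F (u, v) = 0 := by
      rw [hfval] at hu; omega
    have hFu : ∀ v, F (u, v) = 0 := by
      rw [Finset.sum_eq_zero_iff] at hsu
      exact fun v => hsu v (Finset.mem_univ v)
    obtain ⟨⟨c, d⟩, hadj, hcd1, hno⟩ := hF.2 (u, z) (hFu z)
    have hcu : c ≠ u := by
      intro h; subst h; rw [hFu d] at hcd1; exact absurd hcd1 (by norm_num)
    have hGcu : G.Adj c u := by
      have hadj' : G.Adj c u ∨ (c = u ∧ (⊤ : SimpleGraph (Fin n)).Adj d z) := hadj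
      rcases hadj' with h | ⟨h1, h2⟩
      · exact h
      · exact absurd h1 hcu
    have hsc1 : 1 ≤ ∑ v, F (c, v) :=
      le_trans hcd1
        (Finset.single_le_sum (f := fun v => F (c, v)) (fun i _ => Nat.zero_le _)
          (Finset.mem_univ d))
    have hfc : 1 ≤ f c := by rw [hfval]; omega
    refine ⟨c, hGcu, hfc, ?_⟩
    rintro a ⟨ha0, han⟩
    simp only [Function.update_apply] at ha0 han
    -- collect facts about every vertex that is `a` or a `G`-neighbour of `a`
    have hfacts : ∀ x, x = a ∨ G.Adj a x →
        x ≠ u ∧ (x = c → F (c, d) = 1) ∧ (∀ y, ¬(x = c ∧ y = d) → F (x, y) = 0) := by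
      intro x hx
      have hxu : x ≠ u := by
        intro hxu'
        have hnc : ¬ x = c := fun h => hcu (h.symm.trans hxu')
        rcases hx with rfl | hx2
        · rw [if_neg hnc, if_pos hxu'] at ha0
          exact one_ne_zero ha0
        · have h' := han x hx2
          rw [if_neg hnc, if_pos hxu'] at h'
          exact one_ne_zero h'
      have hxc1 : x = c → f c - 1 = 0 := by
        intro hxc
        rcases hx with rfl | hx2
        · rwa [if_pos hxc] at ha0
        · have h' := han x hx2
          rwa [if_pos hxc] at h'
      have hxc0 : x ≠ c → f x = 0 := by
        intro hxc
        rcases hx with rfl | hx2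
        · rwa [if_neg hxc, if_neg hxu] at ha0
        · have h' := han x hx2
          rwa [if_neg hxc, if_neg hxu] at h'
      refine ⟨hxu, ?_, ?_⟩
      · intro hxc
        have h1 := hxc1 hxc
        have h2 : f c = 1 := by omega
        rw [hfval] at h2
        have h4 : F (c, d) ≤ ∑ v, F (c, v) :=
          Finset.single_le_sum (f := fun v => F (c, v)) (fun i _ => Nat.zero_le _)
            (Finset.mem_univ d)
        omega
      · intro y hy
        by_cases hxc : x = c
        · subst hxc
          have hyd : y ≠ d := fun h => hy ⟨rfl, h⟩
          have h1 := hxc1 rfl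
          have h2 : f x = 1 := by omega
          rw [hfval] at h2
          have h4 : F (x, d) ≤ ∑ v, F (x, v) :=
            Finset.single_le_sum (f := fun v => F (x, v)) (fun i _ => Nat.zero_le _)
              (Finset.mem_univ d)
          have hpair := wr_pair_le_sum (fun v => F (x, v)) hyd
          omega
        · have h1 := hxc0 hxc
          rw [hfval] at h1
          have h3 : F (x, y) ≤ ∑ v, F (x, v) :=
            Finset.single_le_sum (f := fun v => F (x, v)) (fun i _ => Nat.zero_le _)
              (Finset.mem_univ y)
          omega
    refine hno (a, z) ⟨?_, ?_⟩
    · obtain ⟨h1, h2, h3⟩ := hfacts a (Or.inl rfl)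
      simp only [Function.update_apply]
      by_cases hA : ((a, z) : α × Fin n) = (c, d)
      · rw [if_pos hA]
        have := h2 (congrArg Prod.fst hA)
        omega
      · rw [if_neg hA, if_neg (show ((a, z) : α × Fin n) ≠ (u, z) from
            fun h => h1 (congrArg Prod.fst h))]
        exact h3 z (fun hc => hA (by rw [hc.1, hc.2]))
    · rintro ⟨x, y⟩ hadj2
      have hx : x = a ∨ G.Adj a x := by
        have hadj' : G.Adj a x ∨ (a = x ∧ (⊤ : SimpleGraph (Fin n)).Adj z y) := hadj2
        rcases hadj' with h | ⟨h1, h2⟩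
        · exact Or.inr h
        · exact Or.inl h1.symm
      obtain ⟨h1, h2, h3⟩ := hfacts x hx
      simp only [Function.update_apply]
      by_cases hA : ((x, y) : α × Fin n) = (c, d)
      · rw [if_pos hA]
        have := h2 (congrArg Prod.fst hA)
        omega
      · rw [if_neg hA, if_neg (show ((x, y) : α × Fin n) ≠ (u, z) from
            fun h => h1 (congrArg Prod.fst h))]
        exact h3 y (fun hc => hA (by rw [hc.1, hc.2]))
  · calc ∑ v, f v ≤ ∑ u, ∑ v, F (u, v) :=
          Finset.sum_le_sum (fun u _ => by rw [hfval]; exact min_le_left _ _)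
      _ = ∑ p, F p := by rw [Fintype.sum_prod_type]

lemma wr_nonempty {β : Type*} [Fintype β] (H : SimpleGraph β) :
    {k | ∃ f : β → ℕ, IsWRDF H f ∧ ∑ v, f v = k}.Nonempty :=
  ⟨∑ _v : β, 2, fun _ => 2,
    ⟨fun _ => le_refl 2, fun v h => absurd h (by norm_num)⟩, rfl⟩

/-- For any graph `G` and any `n ≥ 1`, `γ_r(G∘K_n) = γ_r(G)`. -/
theorem weakRoman_lexProd_complete {α : Type*} [Fintype α] (G : SimpleGraph α)
    (n : ℕ) (hn : 1 ≤ n) :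
    weakRomanNumber (lexProd G (⊤ : SimpleGraph (Fin n))) = weakRomanNumber G := by
  apply le_antisymm
  · obtain ⟨f, hf, hsum⟩ := Nat.sInf_mem (wr_nonempty G)
    obtain ⟨F, hF, hFsum⟩ := wr_push G hn hf
    have h1 : weakRomanNumber (lexProd G (⊤ : SimpleGraph (Fin n))) ≤ ∑ p, F p :=
      Nat.sInf_le ⟨F, hF, rfl⟩
    rw [hFsum, hsum] at h1
    exact h1
  · obtain ⟨F, hF, hFsum⟩ :=
      Nat.sInf_mem (wr_nonempty (lexProd G (⊤ : SimpleGraph (Fin n))))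
    obtain ⟨f, hf, hfsum⟩ := wr_pull G hn hF
    have h1 : weakRomanNumber G ≤ ∑ v, f v := Nat.sInf_le ⟨f, hf, rfl⟩
    have h2 := le_trans h1 hfsum
    rw [hFsum] at h2
    exact h2
end

section
/- Let G be a graph with no isolated vertex such that γ_t(G) = (1/2)·max{γ_r(G), 2·ρ(G)}. Then for any noncomplete graph H, γ_r(G∘H) = 2·γ_t(G). -/
open Finset
open scoped Classical

section Aux

variable {α β : Type*} [Fintype α] [Fintype β]

omit [Fintype α] [Fintype β] in
lemma lexProd_adj {G : SimpleGraph α} {H : SimpleGraph β} {p q : α × β} :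
    (lexProd G H).Adj p q ↔ (G.Adj p.1 q.1 ∨ (p.1 = q.1 ∧ H.Adj p.2 q.2)) := Iff.rfl

omit [Fintype α] in
lemma isWRDF_const_two (G : SimpleGraph α) : IsWRDF G (fun _ => 2) :=
  ⟨fun _ => le_rfl, fun _ h => by simp at h⟩

lemma weakRoman_le (G : SimpleGraph α) {f : α → ℕ} (hf : IsWRDF G f) :
    weakRomanNumber G ≤ ∑ v, f v := Nat.sInf_le ⟨f, hf, rfl⟩

lemma exists_min_wrdf (G : SimpleGraph α) :
    ∃ f : α → ℕ, IsWRDF G f ∧ ∑ v, f v = weakRomanNumber G := by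
  have h : {k | ∃ f : α → ℕ, IsWRDF G f ∧ ∑ v, f v = k}.Nonempty :=
    ⟨∑ _v : α, 2, fun _ => 2, isWRDF_const_two G, rfl⟩
  exact Nat.sInf_mem h

lemma exists_min_tds (G : SimpleGraph α) (hG : ∀ v, ∃ u, G.Adj v u) :
    ∃ S : Finset α, IsTotalDomSet G S ∧ S.card = totalDomNumber G := by
  have h : {k | ∃ S : Finset α, IsTotalDomSet G S ∧ S.card = k}.Nonempty :=
    ⟨Finset.univ.card, Finset.univ,
      fun v => (hG v).imp (fun u hu => ⟨Finset.mem_univ u, hu.symm⟩), rfl⟩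
  exact Nat.sInf_mem h

lemma exists_max_packing (G : SimpleGraph α) :
    ∃ X : Finset α, IsTwoPacking G X ∧ X.card = twoPackingNumber G := by
  have h1 : {k | ∃ X : Finset α, IsTwoPacking G X ∧ X.card = k}.Nonempty :=
    ⟨0, ∅, by simp [IsTwoPacking], rfl⟩
  have h2 : BddAbove {k | ∃ X : Finset α, IsTwoPacking G X ∧ X.card = k} := by
    refine ⟨Fintype.card α, fun k hk => ?_⟩
    obtain ⟨X, _, hc⟩ := hk
    exact hc ▸ X.card_le_univ
  exact Nat.sSup_mem h1 h2

/-- Upper bound: `γ_r(G∘H) ≤ 2 γ_t(G)`. -/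
lemma weakRoman_lexProd_le (G : SimpleGraph α) (H : SimpleGraph β)
    (hG : ∀ v : α, ∃ u, G.Adj v u)
    (hH : ∃ a b : β, a ≠ b ∧ ¬ H.Adj a b) :
    weakRomanNumber (lexProd G H) ≤ 2 * totalDomNumber G := by
  obtain ⟨a, b, hab, _⟩ := hH
  obtain ⟨S, hS, hScard⟩ := exists_min_tds G hG
  set f : α × β → ℕ := fun p => if p.1 ∈ S ∧ (p.2 = a ∨ p.2 = b) then 1 else 0 with hfdef
  have hfa : ∀ u ∈ S, f (u, a) = 1 := by intro u hu; simp [hfdef, hu]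
  have hfb : ∀ u ∈ S, f (u, b) = 1 := by intro u hu; simp [hfdef, hu]
  have hWRDF : IsWRDF (lexProd G H) f := by
    constructor
    · intro v; by_cases h : v.1 ∈ S ∧ (v.2 = a ∨ v.2 = b) <;> simp [hfdef, h]
    · intro v hv
      obtain ⟨u, huS, huv⟩ := hS v.1
      refine ⟨(u, a), Or.inl huv, by rw [hfa u huS], ?_⟩
      rintro w ⟨hw0, hall⟩
      obtain ⟨s, hsS, hs⟩ := hS w.1
      by_cases hsu : s = u
      · have hne1 : (u, b) ≠ ((u, a) : α × β) := by simp [hab.symm]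
        have hne2 : (u, b) ≠ v := by
          rintro rfl; rw [hfb u huS] at hv; omega
        have h2 := hall (u, b) (Or.inl (by rw [← hsu]; exact hs.symm))
        simp [Function.update_apply, hne1, hne2, hfb u huS] at h2
      · have hne1 : (s, a) ≠ ((u, a) : α × β) := by simp [hsu]
        have hne2 : (s, a) ≠ v := by
          rintro rfl; rw [hfa s hsS] at hv; omega
        have h2 := hall (s, a) (Or.inl hs.symm)
        simp [Function.update_apply, hne1, hne2, hfa s hsS] at h2
  have hsum : ∑ p : α × β, f p = 2 * S.card := by
    have h1 : ∑ p : α × β, f p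
        = ∑ p ∈ Finset.univ, if p ∈ S ×ˢ ({a, b} : Finset β) then 1 else 0 := by
      refine Finset.sum_congr rfl fun p _ => ?_
      simp [hfdef, Finset.mem_product]
    rw [h1, Finset.sum_ite_mem, Finset.univ_inter, Finset.sum_const, smul_eq_mul, mul_one,
      Finset.card_product, Finset.card_insert_of_notMem (by simp [hab]), Finset.card_singleton]
    ring
  calc weakRomanNumber (lexProd G H) ≤ ∑ p : α × β, f p := weakRoman_le _ hWRDF
    _ = 2 * S.card := hsum
    _ = 2 * totalDomNumber G := by rw [hScard]

/-- Lower bound 1: `γ_r(G) ≤ γ_r(G∘H)`. -/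
lemma weakRoman_le_weakRoman_lexProd (G : SimpleGraph α) (H : SimpleGraph β) [Nonempty β] :
    weakRomanNumber G ≤ weakRomanNumber (lexProd G H) := by
  obtain ⟨f, hf, hfsum⟩ := exists_min_wrdf (lexProd G H)
  set g : α → ℕ := fun x => min 2 (∑ y, f (x, y)) with hgdef
  have hg0 : ∀ x, g x = 0 → ∀ y, f (x, y) = 0 := by
    intro x hx y
    have hx' : min 2 (∑ y, f (x, y)) = 0 := hx
    have h1 : ∑ y, f (x, y) = 0 := by omega
    exact Finset.sum_eq_zero_iff.1 h1 y (Finset.mem_univ y)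
  have hg1 : ∀ (x : α) (c : β), 1 ≤ f (x, c) → 1 ≤ g x := by
    intro x c hc
    have h1 : f (x, c) ≤ ∑ y, f (x, y) :=
      Finset.single_le_sum (f := fun y => f (x, y)) (fun _ _ => Nat.zero_le _)
        (Finset.mem_univ c)
    have h2 : 1 ≤ min 2 (∑ y, f (x, y)) := by omega
    exact h2
  have hWRDF : IsWRDF G g := by
    refine ⟨fun x => min_le_left _ _, ?_⟩
    intro v hv
    obtain ⟨y0⟩ := ‹Nonempty β›
    obtain ⟨u, hadj, hu1, hsafe⟩ := hf.2 (v, y0) (hg0 v hv y0)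
    have hGuv : G.Adj u.1 v := by
      rcases hadj with h | ⟨h1, h2⟩
      · exact h
      · exfalso
        have : f u = 0 := by
          rw [show u = (v, u.2) from Prod.ext h1 rfl]; exact hg0 v hv u.2
        omega
    have hfu' : 1 ≤ g u.1 := hg1 u.1 u.2 hu1
    refine ⟨u.1, hGuv, hfu', ?_⟩
    rintro w ⟨hw0, hall⟩
    have huv : u.1 ≠ v := G.ne_of_adj hGuv
    have hwv : w ≠ v := by
      rintro rfl
      simp [Function.update_apply, Ne.symm huv] at hw0
    have hwu : w ≠ u.1 := by
      rintro rfl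
      have h := hall v hGuv
      simp [Function.update_apply, Ne.symm huv] at h
    have hgw : g w = 0 := by
      simpa [Function.update_apply, hwu, hwv] using hw0
    -- show (w, y0) is undefended for the moved f, contradiction
    apply hsafe (w, y0)
    have hnu : ((w, y0) : α × β) ≠ u := fun h => hwu (congrArg Prod.fst h)
    have hnv : ((w, y0) : α × β) ≠ (v, y0) := by simp [hwv]
    constructor
    · simp only [Function.update_apply, if_neg hnu, if_neg hnv]
      exact hg0 w hgw y0
    · intro q hq
      rcases (show G.Adj w q.1 ∨ (w = q.1 ∧ H.Adj y0 q.2) from hq) with hq | ⟨hq1, _⟩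
      · -- G.Adj w q.1
        have hq0 := hall q.1 hq
        have hqv : q.1 ≠ v := by
          intro h
          rw [h] at hq0
          simp [Function.update_apply, Ne.symm huv] at hq0
        by_cases hq1u : q.1 = u.1
        · -- g u.1 = 1: all the column weight of u.1 is at u
          rw [hq1u] at hq0
          simp [Function.update_apply] at hq0
          have hgu0 : g u.1 ≤ 1 := by omega
          have hgu1 : min 2 (∑ y, f (u.1, y)) = 1 := by
            have h2 : g u.1 = 1 := le_antisymm hgu0 hfu'
            exact h2
          have hSig : ∑ y, f (u.1, y) = 1 := by omega
          have hfu1 : f u = 1 := by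
            have h3 : f (u.1, u.2) ≤ ∑ y, f (u.1, y) :=
              Finset.single_le_sum (f := fun y => f (u.1, y)) (fun _ _ => Nat.zero_le _)
                (Finset.mem_univ u.2)
            have h4 : f (u.1, u.2) = f u := rfl
            omega
          have hother : ∀ y, y ≠ u.2 → f (u.1, y) = 0 := by
            intro y hy
            have h1 : ∑ z ∈ Finset.univ.erase u.2, f (u.1, z) + f (u.1, u.2)
                = ∑ z, f (u.1, z) := Finset.sum_erase_add _ _ (Finset.mem_univ u.2)
            have h2 : f (u.1, y) ≤ ∑ z ∈ Finset.univ.erase u.2, f (u.1, z) :=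
              Finset.single_le_sum (f := fun z => f (u.1, z)) (fun _ _ => Nat.zero_le _)
                (Finset.mem_erase.2 ⟨hy, Finset.mem_univ y⟩)
            have h4 : f (u.1, u.2) = f u := rfl
            omega
          by_cases hqu : q = u
          · subst hqu
            simp [Function.update_apply, hfu1]
          · have hq2 : q ≠ (v, y0) := by
              rintro rfl; exact huv hq1u.symm
            simp only [Function.update_apply, if_neg hqu, if_neg hq2]
            have h5 : q = (u.1, q.2) := Prod.ext hq1u rfl
            rw [h5]
            refine hother q.2 fun h => hqu ?_
            rw [h5, h]
        · have hq2 : q ≠ u := fun h => hq1u (congrArg Prod.fst h)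
          have hq3 : q ≠ (v, y0) := fun h => hqv (congrArg Prod.fst h)
          have hgq : g q.1 = 0 := by
            simpa [Function.update_apply, hq1u, hqv] using hq0
          simp only [Function.update_apply, if_neg hq2, if_neg hq3]
          exact hg0 q.1 hgq q.2
      · -- w = q.1
        have hq2 : q ≠ u := fun h => hwu (hq1.trans (congrArg Prod.fst h))
        have hq3 : q ≠ (v, y0) := fun h => hwv (hq1.trans (congrArg Prod.fst h))
        simp only [Function.update_apply, if_neg hq2, if_neg hq3]
        have h6 := hg0 w hgw q.2
        rw [hq1] at h6
        exact h6
  calc weakRomanNumber G ≤ ∑ x, g x := weakRoman_le _ hWRDF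
    _ ≤ ∑ x, ∑ y, f (x, y) := Finset.sum_le_sum (fun x _ => min_le_right _ _)
    _ = ∑ p : α × β, f p := by rw [← Fintype.sum_prod_type]
    _ = weakRomanNumber (lexProd G H) := hfsum

/-- Lower bound 2: `2 ρ(G) ≤ γ_r(G∘H)`. -/
lemma two_mul_packing_le_weakRoman_lexProd (G : SimpleGraph α) (H : SimpleGraph β)
    (hH : ∃ a b : β, a ≠ b ∧ ¬ H.Adj a b) :
    2 * twoPackingNumber G ≤ weakRomanNumber (lexProd G H) := by
  obtain ⟨a, b, hab, hnH⟩ := hH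
  obtain ⟨X, hX, hXcard⟩ := exists_max_packing G
  obtain ⟨f, hf, hfsum⟩ := exists_min_wrdf (lexProd G H)
  set T : α → Finset (α × β) :=
    fun x => Finset.univ.filter (fun p => p.1 = x ∨ G.Adj x p.1) with hTdef
  have hmemT : ∀ (x : α) (p : α × β), p ∈ T x ↔ (p.1 = x ∨ G.Adj x p.1) := by
    intro x p; simp [hTdef]
  have hkey : ∀ x : α, 2 ≤ ∑ p ∈ T x, f p := by
    intro x
    by_contra hcon
    have hsum1 : ∑ p ∈ T x, f p ≤ 1 := by omega
    have main : ∀ s t : β, s ≠ t → ¬ H.Adj t s → f (x, s) = 0 → False := by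
      intro s t hst hnadj hfs
      obtain ⟨u, hadj, hu1, hsafe⟩ := hf.2 (x, s) hfs
      have huT : u ∈ T x := by
        rw [hmemT]
        rcases (show G.Adj u.1 x ∨ (u.1 = x ∧ H.Adj u.2 s) from hadj) with h | ⟨h1, _⟩
        · exact Or.inr h.symm
        · exact Or.inl h1
      have hfuSig : f u ≤ ∑ p ∈ T x, f p :=
        Finset.single_le_sum (fun _ _ => Nat.zero_le _) huT
      have hfu : f u = 1 := by omega
      have hzero : ∀ p ∈ T x, p ≠ u → f p = 0 := by
        intro p hp hpu
        have h1 : ∑ q ∈ (T x).erase u, f q + f u = ∑ q ∈ T x, f q :=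
          Finset.sum_erase_add _ _ huT
        have h2 : f p ≤ ∑ q ∈ (T x).erase u, f q :=
          Finset.single_le_sum (fun _ _ => Nat.zero_le _)
            (Finset.mem_erase.2 ⟨hpu, hp⟩)
        omega
      have hut : u ≠ (x, t) := by
        rintro rfl
        rcases (show G.Adj x x ∨ (x = x ∧ H.Adj t s) from hadj) with h | ⟨_, h2⟩
        · exact G.irrefl h
        · exact hnadj h2
      apply hsafe (x, t)
      have hnv : ((x, t) : α × β) ≠ (x, s) := by simp [Ne.symm hst]
      constructor
      · simp only [Function.update_apply, if_neg (Ne.symm hut), if_neg hnv]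
        exact hzero (x, t) ((hmemT x (x, t)).2 (Or.inl rfl)) (Ne.symm hut)
      · intro q hq
        have hqT : q ∈ T x := by
          rw [hmemT]
          rcases (show G.Adj x q.1 ∨ (x = q.1 ∧ H.Adj t q.2) from hq) with h | ⟨h1, _⟩
          · exact Or.inr h
          · exact Or.inl h1.symm
        have hqv : q ≠ ((x, s) : α × β) := by
          rintro rfl
          rcases (show G.Adj x x ∨ (x = x ∧ H.Adj t s) from hq) with h | ⟨_, h2⟩
          · exact G.irrefl h
          · exact hnadj h2
        by_cases hqu : q = u
        · subst hqu
          simp [Function.update_apply, hfu]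
        · simp only [Function.update_apply, if_neg hqu, if_neg hqv]
          exact hzero q hqT hqu
    have hpair : f (x, a) + f (x, b) ≤ ∑ p ∈ T x, f p := by
      have hsub : ({(x, a), (x, b)} : Finset (α × β)) ⊆ T x := by
        intro p hp
        rw [hmemT]
        rcases Finset.mem_insert.1 hp with h | h
        · rw [h]; exact Or.inl rfl
        · rw [Finset.mem_singleton.1 h]; exact Or.inl rfl
      calc f (x, a) + f (x, b) = ∑ p ∈ ({(x, a), (x, b)} : Finset (α × β)), f p :=
            (Finset.sum_pair (by simp [hab])).symm
        _ ≤ ∑ p ∈ T x, f p := Finset.sum_le_sum_of_subset hsub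
    by_cases hfa : f (x, a) = 0
    · exact main a b hab (fun h => hnH h.symm) hfa
    · exact main b a (Ne.symm hab) hnH (by omega)
  have hdisj : (↑X : Set α).PairwiseDisjoint T := by
    intro x1 hx1 x2 hx2 hne
    refine Finset.disjoint_left.2 fun p hp1 hp2 => ?_
    exact hX x1 hx1 x2 hx2 hne p.1
      ⟨(hmemT x1 p).1 hp1, (hmemT x2 p).1 hp2⟩
  calc 2 * twoPackingNumber G = ∑ _x ∈ X, 2 := by
        rw [Finset.sum_const, hXcard, smul_eq_mul, mul_comm]
    _ ≤ ∑ x ∈ X, ∑ p ∈ T x, f p := Finset.sum_le_sum (fun x _ => hkey x)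
    _ = ∑ p ∈ X.biUnion T, f p := (Finset.sum_biUnion hdisj).symm
    _ ≤ ∑ p : α × β, f p := Finset.sum_le_sum_of_subset (Finset.subset_univ _)
    _ = weakRomanNumber (lexProd G H) := hfsum

end Aux


/-- If `G` has no isolated vertex and
`γ_t(G) = (1/2)·max{γ_r(G), 2ρ(G)}`, then for any noncomplete graph `H`,
`γ_r(G∘H) = 2·γ_t(G)`. -/
theorem weakRoman_lexProd_eq_two_mul_totalDom {α β : Type*} [Fintype α] [Fintype β]
    (G : SimpleGraph α) (H : SimpleGraph β)
    (hG : ∀ v : α, ∃ u, G.Adj v u)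
    (hyp : 2 * totalDomNumber G = max (weakRomanNumber G) (2 * twoPackingNumber G))
    (hH : ∃ a b : β, a ≠ b ∧ ¬ H.Adj a b) :
    weakRomanNumber (lexProd G H) = 2 * totalDomNumber G := by
  haveI : Nonempty β := ⟨hH.choose⟩
  apply le_antisymm
  · exact weakRoman_lexProd_le G H hG hH
  · rw [hyp]
    exact max_le (weakRoman_le_weakRoman_lexProd G H)
      (two_mul_packing_le_weakRoman_lexProd G H hH)
end

section
/- For any graph G₁ with no isolated vertex and any noncomplete graph G₂, the corona product satisfies γ_r(G₁⊙G₂) = 2·γ_t(G₁⊙G₂) = 2·ρ(G₁⊙G₂). -/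
open Finset
open scoped Classical

set_option linter.unusedSectionVars false
section Aux
variable {α β : Type*} [Fintype α] [Fintype β]

private lemma upd_same' {γ : Type*} (f : γ → ℕ) (x : γ) (v : ℕ) :
    Function.update f x v x = v := Function.update_self x v f

private lemma upd_ne' {γ : Type*} (f : γ → ℕ) (x y : γ) (v : ℕ) (h : y ≠ x) :
    Function.update f x v y = f y := Function.update_of_ne h v f

private lemma corona_inr_ne {a a' : α} {b b' : β} (h : b ≠ b') :
    (Sum.inr (a, b) : α ⊕ α × β) ≠ Sum.inr (a', b') := by
  intro hh
  exact h (congrArg Prod.snd (Sum.inr_injective hh))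

/-- Block lower bound for any WRDF on a corona. -/
private lemma wrdf_block_ge (G₁ : SimpleGraph α) (G₂ : SimpleGraph β)
    (h₂ : ∃ a b : β, a ≠ b ∧ ¬ G₂.Adj a b)
    (f : α ⊕ α × β → ℕ) (hf : IsWRDF (corona G₁ G₂) f) (a : α) :
    2 ≤ f (Sum.inl a) + ∑ b, f (Sum.inr (a, b)) := by
  obtain ⟨b₁, b₂, hne, hnadj⟩ := h₂
  by_contra hlt
  push_neg at hlt
  have hble : f (Sum.inl a) + ∑ b, f (Sum.inr (a, b)) ≤ 1 := Nat.lt_succ_iff.mp hlt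
  have hterm : ∀ b : β, f (Sum.inr (a, b)) ≤ ∑ b, f (Sum.inr (a, b)) := fun b => by
    simpa using Finset.single_le_sum (f := fun b => f (Sum.inr (a, b)))
      (fun _ _ => Nat.zero_le _) (Finset.mem_univ b)
  by_cases hc : ∃ c : β, 1 ≤ f (Sum.inr (a, c))
  · -- weight concentrated on some inr (a, c)
    obtain ⟨c, hc1⟩ := hc
    have hinl0 : f (Sum.inl a) = 0 := by have := hterm c; omega
    have hfc : f (Sum.inr (a, c)) = 1 := by have := hterm c; omega
    have hzother : ∀ b : β, b ≠ c → f (Sum.inr (a, b)) = 0 := by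
      intro b hbc
      have hsub := Finset.sum_le_sum_of_subset (Finset.subset_univ ({b, c} : Finset β))
        (f := fun b => f (Sum.inr (a, b)))
      rw [Finset.sum_pair hbc] at hsub
      omega
    by_cases hall : ∀ b : β, b ≠ c → G₂.Adj c b
    · -- c is universal; use nonadjacent pair b₁ b₂
      have hcb₁ : c ≠ b₁ := by
        rintro rfl; exact hnadj (hall b₂ hne.symm)
      have hcb₂ : c ≠ b₂ := by
        rintro rfl; exact hnadj (G₂.adj_symm (hall b₁ hne))
      obtain ⟨u, hadj, hfu, hdef⟩ := hf.2 (Sum.inr (a, b₁)) (hzother b₁ (Ne.symm hcb₁))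
      match u, hadj, hfu, hdef with
      | Sum.inl a', hadj, hfu, hdef =>
        obtain rfl : a = a' := (hadj : a' = a).symm
        rw [hinl0] at hfu; omega
      | Sum.inr (a', c'), hadj, hfu, hdef =>
        obtain ⟨ha', hadj2⟩ : a' = a ∧ G₂.Adj c' b₁ := hadj
        obtain rfl : a = a' := ha'.symm
        have hcc : c = c' := by
          by_contra hcc; rw [hzother c' (fun h => hcc h.symm)] at hfu; omega
        obtain rfl := hcc
        refine hdef (Sum.inr (a, b₂)) ⟨?_, ?_⟩
        · rw [upd_ne' _ _ _ _ (corona_inr_ne (Ne.symm hcb₂)),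
            upd_ne' _ _ _ _ (corona_inr_ne hne.symm)]
          exact hzother b₂ (Ne.symm hcb₂)
        · intro x hx
          match x, hx with
          | Sum.inl a'', hx =>
            obtain rfl : a = a'' := hx
            rw [upd_ne' _ _ _ _ (by simp), upd_ne' _ _ _ _ (by simp)]
            exact hinl0
          | Sum.inr (a'', d), hx =>
            obtain ⟨ha'', hbd⟩ : a = a'' ∧ G₂.Adj b₂ d := hx
            obtain rfl : a = a'' := ha''
            by_cases hd : d = c
            · subst hd
              rw [upd_same', hfc]
            · have hdb₁ : d ≠ b₁ := by
                rintro rfl; exact hnadj (G₂.adj_symm hbd)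
              rw [upd_ne' _ _ _ _ (corona_inr_ne hd),
                upd_ne' _ _ _ _ (corona_inr_ne hdb₁)]
              exact hzother d hd
    · -- some b ≠ c nonadjacent to c: that vertex has no defender
      push_neg at hall
      obtain ⟨b, hbc, hnadj'⟩ := hall
      obtain ⟨u, hadj, hfu, _⟩ := hf.2 (Sum.inr (a, b)) (hzother b hbc)
      match u, hadj, hfu with
      | Sum.inl a', hadj, hfu =>
        obtain rfl : a = a' := (hadj : a' = a).symm
        rw [hinl0] at hfu; omega
      | Sum.inr (a', c'), hadj, hfu =>
        obtain ⟨ha', hadj2⟩ : a' = a ∧ G₂.Adj c' b := hadj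
        obtain rfl : a = a' := ha'.symm
        have hcc : c = c' := by
          by_contra hcc; rw [hzother c' (fun h => hcc h.symm)] at hfu; omega
        obtain rfl := hcc
        exact hnadj' hadj2
  · -- all inr vertices of the block are 0
    push_neg at hc
    have hz : ∀ b : β, f (Sum.inr (a, b)) = 0 := fun b => by have := hc b; omega
    obtain ⟨u, hadj, hfu, hdef⟩ := hf.2 (Sum.inr (a, b₁)) (hz b₁)
    match u, hadj, hfu, hdef with
    | Sum.inr (a', c'), hadj, hfu, hdef =>
      obtain ⟨ha', _⟩ : a' = a ∧ G₂.Adj c' b₁ := hadj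
      obtain rfl : a = a' := ha'.symm
      rw [hz c'] at hfu; omega
    | Sum.inl a', hadj, hfu, hdef =>
      obtain rfl : a = a' := (hadj : a' = a).symm
      have hfa : f (Sum.inl a) = 1 := by
        have h2 := hf.1 (Sum.inl a)
        have hs : ∑ b, f (Sum.inr (a, b)) = 0 := by
          exact Finset.sum_eq_zero (fun b _ => hz b)
        omega
      refine hdef (Sum.inr (a, b₂)) ⟨?_, ?_⟩
      · rw [upd_ne' _ _ _ _ (by simp), upd_ne' _ _ _ _ (corona_inr_ne hne.symm)]
        exact hz b₂
      · intro x hx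
        match x, hx with
        | Sum.inl a'', hx =>
          obtain rfl : a = a'' := hx
          rw [upd_same', hfa]
        | Sum.inr (a'', d), hx =>
          obtain ⟨ha'', hbd⟩ : a = a'' ∧ G₂.Adj b₂ d := hx
          obtain rfl : a = a'' := ha''
          have hdb₁ : d ≠ b₁ := by
            rintro rfl; exact hnadj (G₂.adj_symm hbd)
          rw [upd_ne' _ _ _ _ (by simp), upd_ne' _ _ _ _ (corona_inr_ne hdb₁)]
          exact hz d

private def idx {α β : Type*} : α ⊕ α × β → α := Sum.elim id Prod.fst

private lemma weakRoman_corona_eq (G₁ : SimpleGraph α) (G₂ : SimpleGraph β)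
    (h₂ : ∃ a b : β, a ≠ b ∧ ¬ G₂.Adj a b) :
    weakRomanNumber (corona G₁ G₂) = 2 * Fintype.card α := by
  set f₀ : α ⊕ α × β → ℕ := Sum.elim (fun _ => 2) (fun _ => 0) with hf₀
  have hWRDF : IsWRDF (corona G₁ G₂) f₀ := by
    constructor
    · rintro (a | p) <;> simp [hf₀]
    · rintro (a | ⟨a, b⟩) hv
      · simp [hf₀] at hv
      · refine ⟨Sum.inl a, rfl, by simp [hf₀], ?_⟩
        rintro (a' | ⟨a', c⟩) ⟨hw0, hwnbr⟩
        · by_cases ha : a' = a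
          · subst ha; rw [upd_same'] at hw0; simp [hf₀] at hw0
          · rw [upd_ne' _ _ _ _ (by simp [ha]), upd_ne' _ _ _ _ (by simp)] at hw0
            simp [hf₀] at hw0
        · have hw0' := hwnbr (Sum.inl a') rfl
          by_cases ha : a' = a
          · subst ha; rw [upd_same'] at hw0'; simp [hf₀] at hw0'
          · rw [upd_ne' _ _ _ _ (by simp [ha]), upd_ne' _ _ _ _ (by simp)] at hw0'
            simp [hf₀] at hw0'
  have hsum₀ : ∑ x, f₀ x = 2 * Fintype.card α := by
    rw [Fintype.sum_sum_type]
    simp [hf₀, mul_comm]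
  have hmem : 2 * Fintype.card α ∈
      {k | ∃ f : α ⊕ α × β → ℕ, IsWRDF (corona G₁ G₂) f ∧ ∑ v, f v = k} :=
    ⟨f₀, hWRDF, hsum₀⟩
  have hbound : ∀ k ∈ {k | ∃ f : α ⊕ α × β → ℕ, IsWRDF (corona G₁ G₂) f ∧ ∑ v, f v = k},
      2 * Fintype.card α ≤ k := by
    rintro k ⟨f, hf, rfl⟩
    have : ∑ x, f x = ∑ a, (f (Sum.inl a) + ∑ b, f (Sum.inr (a, b))) := by
      rw [Fintype.sum_sum_type, Fintype.sum_prod_type, Finset.sum_add_distrib]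
    rw [this]
    calc 2 * Fintype.card α = ∑ _a : α, 2 := by simp [mul_comm]
      _ ≤ _ := Finset.sum_le_sum (fun a _ => wrdf_block_ge G₁ G₂ h₂ f hf a)
  exact le_antisymm (Nat.sInf_le hmem) (le_csInf ⟨_, hmem⟩ hbound)

private lemma totalDom_corona_eq (G₁ : SimpleGraph α) (G₂ : SimpleGraph β)
    (h₁ : ∀ v : α, ∃ u, G₁.Adj v u) (h₂ : ∃ a b : β, a ≠ b ∧ ¬ G₂.Adj a b) :
    totalDomNumber (corona G₁ G₂) = Fintype.card α := by
  obtain ⟨b₁, b₂, hne, hnadj⟩ := h₂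
  set S₀ : Finset (α ⊕ α × β) := Finset.univ.image Sum.inl with hS₀
  have hTDS : IsTotalDomSet (corona G₁ G₂) S₀ := by
    rintro (a | ⟨a, b⟩)
    · obtain ⟨u, hu⟩ := h₁ a
      exact ⟨Sum.inl u, by simp [hS₀], G₁.adj_symm hu⟩
    · exact ⟨Sum.inl a, by simp [hS₀], rfl⟩
  have hcard : S₀.card = Fintype.card α := by
    rw [hS₀, Finset.card_image_of_injective _ Sum.inl_injective, Finset.card_univ]
  have hmem : Fintype.card α ∈
      {k | ∃ S : Finset (α ⊕ α × β), IsTotalDomSet (corona G₁ G₂) S ∧ S.card = k} :=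
    ⟨S₀, hTDS, hcard⟩
  have hbound : ∀ k ∈
      {k | ∃ S : Finset (α ⊕ α × β), IsTotalDomSet (corona G₁ G₂) S ∧ S.card = k},
      Fintype.card α ≤ k := by
    rintro k ⟨S, hS, rfl⟩
    have hsub : (Finset.univ : Finset α) ⊆ S.image ((idx (α := α) (β := β))) := by
      intro a _
      obtain ⟨u, huS, hadj⟩ := hS (Sum.inr (a, b₁))
      refine Finset.mem_image.mpr ⟨u, huS, ?_⟩
      match u, hadj with
      | Sum.inl a', hadj => exact (hadj : a' = a)
      | Sum.inr (a', c'), hadj => exact (hadj : a' = a ∧ G₂.Adj c' b₁).1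
    calc Fintype.card α = (Finset.univ : Finset α).card := (Finset.card_univ).symm
      _ ≤ (S.image ((idx (α := α) (β := β)))).card := Finset.card_le_card hsub
      _ ≤ S.card := Finset.card_image_le
  exact le_antisymm (Nat.sInf_le hmem) (le_csInf ⟨_, hmem⟩ hbound)

private lemma twoPacking_corona_eq (G₁ : SimpleGraph α) (G₂ : SimpleGraph β)
    (h₂ : ∃ a b : β, a ≠ b ∧ ¬ G₂.Adj a b) :
    twoPackingNumber (corona G₁ G₂) = Fintype.card α := by
  obtain ⟨b₁, b₂, hne, hnadj⟩ := h₂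
  set X₀ : Finset (α ⊕ α × β) := Finset.univ.image (fun a => Sum.inr (a, b₁)) with hX₀
  have hinj : Function.Injective (fun a : α => (Sum.inr (a, b₁) : α ⊕ α × β)) := by
    intro a a' h
    exact congrArg Prod.fst (Sum.inr_injective h)
  have hblock : ∀ (a : α) (w : α ⊕ α × β),
      (w = Sum.inr (a, b₁) ∨ (corona G₁ G₂).Adj (Sum.inr (a, b₁)) w) →
      (idx (α := α) (β := β)) w = a := by
    intro a w hw
    rcases hw with rfl | hadj
    · rfl
    · match w, hadj with
      | Sum.inl a', hadj => exact ((hadj : a = a')).symm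
      | Sum.inr (a', c'), hadj => exact ((hadj : a = a' ∧ G₂.Adj b₁ c').1).symm
  have hpack : IsTwoPacking (corona G₁ G₂) X₀ := by
    intro u hu v hv huv w hw
    obtain ⟨a, _, rfl⟩ := Finset.mem_image.mp hu
    obtain ⟨a', _, rfl⟩ := Finset.mem_image.mp hv
    have ha : a ≠ a' := fun h => huv (by rw [h])
    exact ha ((hblock a w hw.1).symm.trans (hblock a' w hw.2))
  have hcard : X₀.card = Fintype.card α := by
    rw [hX₀, Finset.card_image_of_injective _ hinj, Finset.card_univ]
  have hmem : Fintype.card α ∈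
      {k | ∃ X : Finset (α ⊕ α × β), IsTwoPacking (corona G₁ G₂) X ∧ X.card = k} :=
    ⟨X₀, hpack, hcard⟩
  have hbound : ∀ k ∈
      {k | ∃ X : Finset (α ⊕ α × β), IsTwoPacking (corona G₁ G₂) X ∧ X.card = k},
      k ≤ Fintype.card α := by
    rintro k ⟨X, hX, rfl⟩
    have hinjOn : Set.InjOn ((idx (α := α) (β := β))) X := by
      intro x hx y hy hxy
      by_contra hne'
      refine hX x hx y hy hne' (Sum.inl ((idx (α := α) (β := β)) x)) ⟨?_, ?_⟩
      · match x with
        | Sum.inl a => exact Or.inl rfl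
        | Sum.inr (a, c) => exact Or.inr rfl
      · rw [hxy]
        match y with
        | Sum.inl a => exact Or.inl rfl
        | Sum.inr (a, c) => exact Or.inr rfl
    calc X.card = (X.image ((idx (α := α) (β := β)))).card :=
          (Finset.card_image_of_injOn hinjOn).symm
      _ ≤ Fintype.card α := by
          rw [← Finset.card_univ]; exact Finset.card_le_card (Finset.subset_univ _)
  exact le_antisymm (csSup_le ⟨_, hmem⟩ hbound)
    (le_csSup ⟨Fintype.card α, hbound⟩ hmem)

end Aux

/-- For any graph `G₁` with no isolated vertex and any
noncomplete graph `G₂`, `γ_r(G₁⊙G₂) = 2·γ_t(G₁⊙G₂) = 2·ρ(G₁⊙G₂)`. -/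
theorem weakRoman_corona {α β : Type*} [Fintype α] [Fintype β]
    (G₁ : SimpleGraph α) (G₂ : SimpleGraph β)
    (h₁ : ∀ v : α, ∃ u, G₁.Adj v u)
    (h₂ : ∃ a b : β, a ≠ b ∧ ¬ G₂.Adj a b) :
    weakRomanNumber (corona G₁ G₂) = 2 * totalDomNumber (corona G₁ G₂) ∧
    weakRomanNumber (corona G₁ G₂) = 2 * twoPackingNumber (corona G₁ G₂) := by
  refine ⟨?_, ?_⟩
  · rw [weakRoman_corona_eq G₁ G₂ h₂, totalDom_corona_eq G₁ G₂ h₁ h₂]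
  · rw [weakRoman_corona_eq G₁ G₂ h₂, twoPacking_corona_eq G₁ G₂ h₂]
end

section
/- Let G be a graph of minimum degree at least two such that γ_{2,t}(G) = max{γ_r(G), 2·ρ(G)}. Then for any noncomplete graph H, γ_r(G∘H) = γ_{2,t}(G). -/
open Finset
open scoped Classical

section Aux
variable {α β : Type*} [Fintype α] [Fintype β] {G : SimpleGraph α} {H : SimpleGraph β}

lemma aux_upper (S : Finset α) (hS : IsDoubleTotalDomSet G S) (b0 : β) :
    IsWRDF (lexProd G H) fun p => if p.1 ∈ S ∧ p.2 = b0 then 1 else 0 := by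
  refine ⟨fun v => by by_cases h : v.1 ∈ S ∧ v.2 = b0 <;> simp [h], ?_⟩
  intro p hp
  obtain ⟨u₁, hu₁, u₂, hu₂, hne, ha₁, ha₂⟩ := hS p.1
  refine ⟨(u₁, b0), Or.inl ha₁, by simp [hu₁], ?_⟩
  rintro w ⟨hw0, hwn⟩
  obtain ⟨s₁, hs₁, s₂, hs₂, hsne, hb₁, hb₂⟩ := hS w.1
  have hex : ∃ s ∈ S, G.Adj s w.1 ∧ s ≠ u₁ := by
    rcases eq_or_ne s₁ u₁ with h | h
    · exact ⟨s₂, hs₂, hb₂, fun hh => hsne (h.trans hh.symm)⟩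
    · exact ⟨s₁, hs₁, hb₁, h⟩
  obtain ⟨s, hsS, hsadj, hsu⟩ := hex
  have h1 := hwn (s, b0) (Or.inl hsadj.symm)
  simp only [Function.update_apply] at h1
  simp [hsu, hsS] at h1

lemma aux_sum (S : Finset α) (b0 : β) :
    (∑ p : α × β, if p.1 ∈ S ∧ p.2 = b0 then (1:ℕ) else 0) = S.card := by
  rw [Fintype.sum_prod_type]
  have h : ∀ v : α, (∑ b : β, if v ∈ S ∧ b = b0 then (1:ℕ) else 0)
      = if v ∈ S then 1 else 0 := by
    intro v
    by_cases h : v ∈ S <;> simp [h]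
  simp only [h]
  simp

end Aux


lemma aux_gr {α β : Type*} [Fintype α] [Fintype β] {G : SimpleGraph α} {H : SimpleGraph β}
    (f : α × β → ℕ) (hf : IsWRDF (lexProd G H) f) (b0 : β) :
    weakRomanNumber G ≤ ∑ p, f p := by
  set g : α → ℕ := fun v => min 2 (∑ b, f (v, b)) with hgdef
  have hgw : IsWRDF G g := by
    refine ⟨fun v => min_le_left _ _, ?_⟩
    intro v hv
    have hSv : ∑ b, f (v, b) = 0 := by
      simp only [hgdef] at hv; omega
    have hcol : ∀ b, f (v, b) = 0 := fun b =>
      Finset.sum_eq_zero_iff.mp hSv b (Finset.mem_univ b)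
    obtain ⟨q, hadj, hq1, hqdef⟩ := hf.2 (v, b0) (hcol b0)
    obtain ⟨u, c⟩ := q
    have hu_ne : u ≠ v := by
      rintro rfl
      rw [hcol c] at hq1; omega
    have hGuv : G.Adj u v := by
      rcases hadj with h | ⟨h, _⟩
      · exact h
      · exact absurd h hu_ne
    have hSu1 : 1 ≤ ∑ b, f (u, b) :=
      le_trans hq1 (Finset.single_le_sum (f := fun b => f (u, b))
        (fun i _ => Nat.zero_le _) (Finset.mem_univ c))
    refine ⟨u, hGuv, by simp only [hgdef]; omega, ?_⟩
    rintro w ⟨hw0, hwn⟩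
    have hg'v : Function.update (Function.update g v 1) u (g u - 1) v = 1 := by
      simp only [Function.update_apply]
      rw [if_neg hu_ne.symm]
      exact if_pos trivial
    have hwv : w ≠ v := by
      rintro rfl; rw [hg'v] at hw0; exact one_ne_zero hw0
    have hwu : w ≠ u := by
      rintro rfl
      have := hwn v hGuv
      rw [hg'v] at this; exact one_ne_zero this
    have hgw0 : g w = 0 := by
      simp only [Function.update_apply] at hw0
      rwa [if_neg hwu, if_neg hwv] at hw0
    have hSw : ∑ b, f (w, b) = 0 := by simp only [hgdef] at hgw0; omega
    have hcolw : ∀ b, f (w, b) = 0 := fun b =>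
      Finset.sum_eq_zero_iff.mp hSw b (Finset.mem_univ b)
    refine hqdef (w, b0) ⟨?_, ?_⟩
    · simp only [Function.update_apply]
      rw [if_neg (fun h => hwu (congrArg Prod.fst h)),
        if_neg (fun h => hwv (congrArg Prod.fst h))]
      exact hcolw b0
    · rintro ⟨y, d⟩ hadj2
      simp only [Function.update_apply]
      rcases hadj2 with hGy | ⟨hy, hd⟩
      · -- G.Adj w y
        have hy0 := hwn y hGy
        simp only [Function.update_apply] at hy0
        have hyv : y ≠ v := by
          rintro rfl
          simp [hu_ne, hu_ne.symm] at hy0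
        by_cases hyu : y = u
        · subst hyu
          rw [if_pos rfl] at hy0
          have hgu1 : 1 ≤ g y := by simp only [hgdef]; omega
          have hSu : ∑ b, f (y, b) = 1 := by
            simp only [hgdef] at hy0 hgu1; omega
          by_cases hqd : d = c
          · subst hqd
            rw [if_pos rfl]
            have hle : f (y, d) ≤ ∑ b, f (y, b) :=
              Finset.single_le_sum (f := fun b => f (y, b))
                (fun i _ => Nat.zero_le _) (Finset.mem_univ d)
            omega
          · rw [if_neg (fun h => hqd (congrArg Prod.snd h)),
              if_neg (fun h => hyv (congrArg Prod.fst h))]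
            have hpair : f (y, c) + f (y, d) ≤ ∑ b, f (y, b) := by
              rw [← Finset.sum_pair (Ne.symm hqd) (f := fun b => f (y, b))]
              exact Finset.sum_le_sum_of_subset (Finset.subset_univ _)
            omega
        · rw [if_neg (fun h => hyu (congrArg Prod.fst h)),
            if_neg (fun h => hyv (congrArg Prod.fst h))]
          have hgy : g y = 0 := by
            rwa [if_neg hyu, if_neg hyv] at hy0
          have hz : ∑ b, f (y, b) = 0 := by simp only [hgdef] at hgy; omega
          exact Finset.sum_eq_zero_iff.mp hz d (Finset.mem_univ d)
      · -- y = w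
        have hyw : y = w := hy.symm
        subst hyw
        rw [if_neg (fun h => hwu (congrArg Prod.fst h)),
          if_neg (fun h => hwv (congrArg Prod.fst h))]
        exact hcolw d
  have hsum : ∑ v, g v ≤ ∑ p, f p := by
    rw [Fintype.sum_prod_type]
    exact Finset.sum_le_sum fun v _ => min_le_right _ _
  exact le_trans
    (Nat.sInf_le (show (∑ v, g v) ∈ {k | ∃ f : α → ℕ, IsWRDF G f ∧ ∑ v, f v = k} from
      ⟨g, hgw, rfl⟩)) hsum

lemma aux_pack {α β : Type*} [Fintype α] [Fintype β] {G : SimpleGraph α} {H : SimpleGraph β}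
    (f : α × β → ℕ) (hf : IsWRDF (lexProd G H) f)
    {a b : β} (hab : a ≠ b) (hHab : ¬ H.Adj a b)
    (X : Finset α) (hX : IsTwoPacking G X) :
    2 * X.card ≤ ∑ p, f p := by
  classical
  set blk : α → Finset (α × β) :=
    fun x => Finset.univ.filter (fun p => p.1 = x ∨ G.Adj x p.1) with hblk
  have hmemblk : ∀ (x : α) (p : α × β), p ∈ blk x ↔ (p.1 = x ∨ G.Adj x p.1) := by
    intro x p; simp [hblk]
  have hkey : ∀ x : α, 2 ≤ ∑ p ∈ blk x, f p := by
    intro x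
    by_contra hB
    push_neg at hB
    have hB1 : ∑ p ∈ blk x, f p ≤ 1 := by omega
    have hsingle : ∀ p ∈ blk x, f p ≤ ∑ p ∈ blk x, f p := fun p hp =>
      Finset.single_le_sum (fun i _ => Nat.zero_le _) hp
    have hball : ∀ p q, p ∈ blk x → q ∈ blk x → p ≠ q → 1 ≤ f p → f q = 0 := by
      intro p q hp hq hpq h1
      by_contra hq0
      have hpair : f p + f q ≤ ∑ p ∈ blk x, f p := by
        rw [← Finset.sum_pair hpq]
        refine Finset.sum_le_sum_of_subset ?_
        intro z hz
        rcases Finset.mem_insert.mp hz with rfl | hz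
        · exact hp
        · rw [Finset.mem_singleton.mp hz]; exact hq
      omega
    have hadjblk : ∀ (q : α × β) (e : β), (lexProd G H).Adj q (x, e) → q ∈ blk x := by
      rintro ⟨u, c⟩ e (h | ⟨h, _⟩)
      · exact (hmemblk x _).mpr (Or.inr h.symm)
      · exact (hmemblk x _).mpr (Or.inl h)
    by_cases hex : ∃ q0 ∈ blk x, 1 ≤ f q0
    · obtain ⟨⟨u, c⟩, hq0b, hq01⟩ := hex
      by_cases hqa : (u, c) = (x, a)
      · -- defender of (x, b) must be (x,a) : impossible adjacency
        have hfxb : f (x, b) = 0 :=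
          hball (u, c) (x, b) hq0b ((hmemblk x _).mpr (Or.inl rfl))
            (by rw [hqa]; exact fun h => hab (congrArg Prod.snd h)) hq01
        obtain ⟨q, hadj, hq1, _⟩ := hf.2 (x, b) hfxb
        have hqb : q ∈ blk x := hadjblk q b hadj
        have hqq0 : q = (u, c) := by
          by_contra hne
          have := hball (u, c) q hq0b hqb (Ne.symm hne) hq01
          omega
        rw [hqq0, hqa] at hadj
        rcases hadj with h | ⟨_, h⟩
        · exact G.irrefl h
        · exact hHab h
      · -- defender of (x, a)
        have hfxa : f (x, a) = 0 :=
          hball (u, c) (x, a) hq0b ((hmemblk x _).mpr (Or.inl rfl)) hqa hq01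
        obtain ⟨q, hadj, hq1, hdef⟩ := hf.2 (x, a) hfxa
        have hqb : q ∈ blk x := hadjblk q a hadj
        have hqq0 : q = (u, c) := by
          by_contra hne
          have := hball (u, c) q hq0b hqb (Ne.symm hne) hq01
          omega
        subst hqq0
        have hqxb : (u, c) ≠ (x, b) := by
          intro h
          rw [h] at hadj
          rcases hadj with h' | ⟨_, h'⟩
          · exact G.irrefl h'
          · exact hHab h'.symm
        have hfq1 : f (u, c) = 1 := le_antisymm (le_trans (hsingle _ hq0b) hB1) hq1
        refine hdef (x, b) ⟨?_, ?_⟩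
        · simp only [Function.update_apply]
          rw [if_neg (Ne.symm hqxb), if_neg (fun h => hab (congrArg Prod.snd h).symm)]
          exact hball (u, c) (x, b) hq0b ((hmemblk x _).mpr (Or.inl rfl)) hqxb hq01
        · rintro ⟨y, d⟩ hadj2
          simp only [Function.update_apply]
          rcases hadj2 with hGy | ⟨hy, hd⟩
          · -- G.Adj x y
            have hyx : y ≠ x := hGy.ne'
            by_cases hq : (y, d) = (u, c)
            · rw [if_pos hq]; omega
            · rw [if_neg hq, if_neg (show ¬((y, d) = (x, a)) from
                fun h => hyx (congrArg Prod.fst h))]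
              exact hball (u, c) (y, d) hq0b ((hmemblk x _).mpr (Or.inr hGy))
                (Ne.symm hq) hq01
          · -- y = x, H.Adj b d
            have hda : d ≠ a := fun h => hHab (by rw [h] at hd; exact hd.symm)
            by_cases hq : (y, d) = (u, c)
            · rw [if_pos hq]; omega
            · rw [if_neg hq, if_neg (show ¬((y, d) = (x, a)) from
                fun h => hda (congrArg Prod.snd h))]
              exact hball (u, c) (y, d) hq0b ((hmemblk x _).mpr (Or.inl hy.symm))
                (Ne.symm hq) hq01
    · push_neg at hex
      have hfxa : f (x, a) = 0 := by
        have := hex (x, a) ((hmemblk x _).mpr (Or.inl rfl)); omega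
      obtain ⟨q, hadj, hq1, _⟩ := hf.2 (x, a) hfxa
      have := hex q (hadjblk q a hadj); omega
  have hdisj : (X : Set α).PairwiseDisjoint blk := by
    intro x hx y hy hxy
    simp only [Function.onFun]
    rw [Finset.disjoint_left]
    intro p hpx hpy
    exact hX x (Finset.mem_coe.mp hx) y (Finset.mem_coe.mp hy) hxy p.1
      ⟨(hmemblk x p).mp hpx, (hmemblk y p).mp hpy⟩
  calc 2 * X.card = ∑ _x ∈ X, 2 := by rw [Finset.sum_const, smul_eq_mul, mul_comm]
    _ ≤ ∑ x ∈ X, ∑ p ∈ blk x, f p := Finset.sum_le_sum fun x _ => hkey x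
    _ = ∑ p ∈ X.biUnion blk, f p := (Finset.sum_biUnion hdisj).symm
    _ ≤ ∑ p, f p := Finset.sum_le_sum_of_subset (Finset.subset_univ _)

/-- If `G` has minimum degree at least two and
`γ_{2,t}(G) = max{γ_r(G), 2ρ(G)}`, then for any noncomplete graph `H`,
`γ_r(G∘H) = γ_{2,t}(G)`. -/
theorem weakRoman_lexProd_eq_doubleTotalDom {α β : Type*} [Fintype α] [Fintype β]
    (G : SimpleGraph α) (H : SimpleGraph β)
    (hG : ∀ v : α, ∃ u₁ u₂, u₁ ≠ u₂ ∧ G.Adj v u₁ ∧ G.Adj v u₂)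
    (hyp : doubleTotalDomNumber G = max (weakRomanNumber G) (2 * twoPackingNumber G))
    (hH : ∃ a b : β, a ≠ b ∧ ¬ H.Adj a b) :
    weakRomanNumber (lexProd G H) = doubleTotalDomNumber G := by
  classical
  obtain ⟨a, b, hab, hHab⟩ := hH
  -- a minimum double total dominating set exists
  have hDTne : {k | ∃ S : Finset α, IsDoubleTotalDomSet G S ∧ S.card = k}.Nonempty := by
    refine ⟨(Finset.univ : Finset α).card, Finset.univ, ?_, rfl⟩
    intro v
    obtain ⟨u₁, u₂, hne, h1, h2⟩ := hG v
    exact ⟨u₁, Finset.mem_univ _, u₂, Finset.mem_univ _, hne, h1.symm, h2.symm⟩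
  have hDTmem : doubleTotalDomNumber G ∈
      {k | ∃ S : Finset α, IsDoubleTotalDomSet G S ∧ S.card = k} := Nat.sInf_mem hDTne
  obtain ⟨S, hS, hScard⟩ := hDTmem
  -- upper bound
  have hup : weakRomanNumber (lexProd G H) ≤ doubleTotalDomNumber G := by
    rw [← hScard]
    exact Nat.sInf_le ⟨fun p => if p.1 ∈ S ∧ p.2 = b then 1 else 0,
      aux_upper (H := H) S hS b, aux_sum S b⟩
  -- a minimum WRDF of the product exists
  have hWne : {k | ∃ f : α × β → ℕ, IsWRDF (lexProd G H) f ∧ ∑ p, f p = k}.Nonempty := by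
    refine ⟨∑ p : α × β, 2, fun _ => 2, ⟨fun _ => le_refl 2, ?_⟩, rfl⟩
    intro v hv
    simp at hv
  have hWmem : weakRomanNumber (lexProd G H) ∈
      {k | ∃ f : α × β → ℕ, IsWRDF (lexProd G H) f ∧ ∑ p, f p = k} := Nat.sInf_mem hWne
  obtain ⟨f, hfW, hfsum⟩ := hWmem
  -- a maximum 2-packing exists
  have hPne : {k | ∃ X : Finset α, IsTwoPacking G X ∧ X.card = k}.Nonempty :=
    ⟨0, ∅, fun u hu => absurd hu (Finset.notMem_empty u), Finset.card_empty⟩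
  have hPbdd : BddAbove {k | ∃ X : Finset α, IsTwoPacking G X ∧ X.card = k} := by
    refine ⟨Fintype.card α, ?_⟩
    rintro k ⟨X, _, rfl⟩
    exact (Finset.card_le_univ X).trans_eq Finset.card_univ
  have hPmem : twoPackingNumber G ∈
      {k | ∃ X : Finset α, IsTwoPacking G X ∧ X.card = k} := Nat.sSup_mem hPne hPbdd
  obtain ⟨X, hXp, hXcard⟩ := hPmem
  -- lower bound
  have h1 : weakRomanNumber G ≤ weakRomanNumber (lexProd G H) := by
    rw [← hfsum]; exact aux_gr f hfW b
  have h2 : 2 * twoPackingNumber G ≤ weakRomanNumber (lexProd G H) := by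
    rw [← hfsum, ← hXcard]
    exact aux_pack f hfW hab hHab X hXp
  have hlow : doubleTotalDomNumber G ≤ weakRomanNumber (lexProd G H) := by
    rw [hyp]; exact max_le h1 h2
  exact le_antisymm hup hlow
end

section
/- For any integer n ≥ 3 and any noncomplete graph H, 2 ≤ γ_r(K_n∘H) ≤ 3. Furthermore, γ_r(K_n∘H) = 2 if and only if γ_r(H) = 2 or there exists a vertex a of H such that the subgraph of H induced by V(H)\N[a] is a clique. -/
open Finset
open scoped Classical

section Aux
variable {α : Type*}

lemma not_und_pos (G : SimpleGraph α) (g : α → ℕ) (w : α) (h : g w ≠ 0) :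
    ¬ Undefended G g w := fun hu => h hu.1

lemma not_und_adj (G : SimpleGraph α) (g : α → ℕ) {w x : α} (h : G.Adj w x) (hx : g x ≠ 0) :
    ¬ Undefended G g w := fun hu => hx (hu.2 x h)

lemma shape_two [Fintype α] (f : α → ℕ) (hle : ∀ v, f v ≤ 2) (hsum : ∑ v, f v = 2) :
    (∃ x, f x = 2 ∧ ∀ y, y ≠ x → f y = 0) ∨
    (∃ x y, x ≠ y ∧ f x = 1 ∧ f y = 1 ∧ ∀ z, z ≠ x → z ≠ y → f z = 0) := by
  by_cases hx : ∃ x, f x = 2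
  · obtain ⟨x, hx⟩ := hx
    left
    refine ⟨x, hx, ?_⟩
    have h1 : ∑ y ∈ Finset.univ.erase x, f y = 0 := by
      have := Finset.add_sum_erase Finset.univ f (Finset.mem_univ x)
      omega
    intro y hy
    exact Finset.sum_eq_zero_iff.mp h1 y (Finset.mem_erase.mpr ⟨hy, Finset.mem_univ y⟩)
  · push_neg at hx
    right
    have h1 : ∀ v, f v ≤ 1 := fun v => by have := hle v; have := hx v; omega
    have hx0 : ∃ x, f x ≠ 0 := by
      by_contra h
      push_neg at h
      simp [h] at hsum
    obtain ⟨x, hxne⟩ := hx0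
    have hfx : f x = 1 := by have := h1 x; omega
    have h2 : ∑ y ∈ Finset.univ.erase x, f y = 1 := by
      have := Finset.add_sum_erase Finset.univ f (Finset.mem_univ x)
      omega
    obtain ⟨y, hymem, hyne⟩ := Finset.exists_ne_zero_of_sum_ne_zero (by omega : ∑ y ∈ Finset.univ.erase x, f y ≠ 0)
    have hyx : y ≠ x := (Finset.mem_erase.mp hymem).1
    have hfy : f y = 1 := by have := h1 y; omega
    refine ⟨x, y, hyx.symm, hfx, hfy, ?_⟩
    have h3 : ∑ z ∈ (Finset.univ.erase x).erase y, f z = 0 := by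
      have := Finset.add_sum_erase (Finset.univ.erase x) f hymem
      omega
    intro z hzx hzy
    exact Finset.sum_eq_zero_iff.mp h3 z
      (Finset.mem_erase.mpr ⟨hzy, Finset.mem_erase.mpr ⟨hzx, Finset.mem_univ z⟩⟩)

lemma wrdf_lb [Fintype α] (G : SimpleGraph α) (hG : ∃ a b, a ≠ b ∧ ¬ G.Adj a b)
    (f : α → ℕ) (hf : IsWRDF G f) : 2 ≤ ∑ v, f v := by
  obtain ⟨a, b, hab, hnadj⟩ := hG
  by_contra hlt
  push_neg at hlt
  interval_cases h : (∑ v, f v)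
  · -- sum = 0 : everything is 0
    have h0 : ∀ v, f v = 0 := fun v =>
      Finset.sum_eq_zero_iff.mp h v (Finset.mem_univ v)
    obtain ⟨u, -, hu1, -⟩ := hf.2 a (h0 a)
    have := h0 u
    omega
  · -- sum = 1 : exactly one vertex p with value 1
    obtain ⟨p, -, hpne⟩ := Finset.exists_ne_zero_of_sum_ne_zero (by omega : ∑ v, f v ≠ 0)
    have hfp : f p = 1 := by
      have hle := Finset.single_le_sum (f := f) (fun i _ => Nat.zero_le _) (Finset.mem_univ p)
      omega
    have hrest : ∀ q, q ≠ p → f q = 0 := by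
      have h2 : ∑ y ∈ Finset.univ.erase p, f y = 0 := by
        have := Finset.add_sum_erase Finset.univ f (Finset.mem_univ p)
        omega
      intro q hq
      exact Finset.sum_eq_zero_iff.mp h2 q (Finset.mem_erase.mpr ⟨hq, Finset.mem_univ q⟩)
    by_cases hpa : p = a
    · -- defender of b must be a, but not adjacent
      have hfb : f b = 0 := hrest b (by rw [hpa]; exact hab.symm)
      obtain ⟨u, hadj, hu1, -⟩ := hf.2 b hfb
      have : u = p := by by_contra h'; have := hrest u h'; omega
      rw [this, hpa] at hadj
      exact hnadj hadj
    · by_cases hpb : p = b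
      · have hfa : f a = 0 := hrest a (by rw [hpb]; exact hab)
        obtain ⟨u, hadj, hu1, -⟩ := hf.2 a hfa
        have : u = p := by by_contra h'; have := hrest u h'; omega
        rw [this, hpb] at hadj
        exact hnadj (hadj.symm)
      · -- p ∉ {a, b}: defend a, then b is undefended
        have hfa : f a = 0 := hrest a (fun h => hpa h.symm)
        obtain ⟨u, hadj, hu1, hw⟩ := hf.2 a hfa
        have hup : u = p := by by_contra h'; have := hrest u h'; omega
        subst hup
        refine hw b ⟨?_, ?_⟩
        · simp only [Function.update_apply]
          rw [if_neg (fun h : b = u => hpb h.symm), if_neg (fun h : b = a => hab h.symm)]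
          exact hrest b (fun h => hpb h.symm)
        · intro x hbx
          rcases eq_or_ne x u with rfl | hxu
          · simp [Function.update_apply, hfp]
          · have hxa : x ≠ a := by rintro rfl; exact hnadj hbx.symm
            simp [Function.update_apply, hxu, hxa, hrest x hxu]
  done

end Aux

section Prod
variable {β : Type*} [Fintype β] {n : ℕ} {H : SimpleGraph β}

lemma lex_adj (p q : Fin n × β) :
    (lexProd (⊤ : SimpleGraph (Fin n)) H).Adj p q ↔
      p.1 ≠ q.1 ∨ (p.1 = q.1 ∧ H.Adj p.2 q.2) := by
  simp [lexProd]

lemma ub3 (hn : 3 ≤ n) (a : β) :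
    ∃ f : Fin n × β → ℕ,
      IsWRDF (lexProd (⊤ : SimpleGraph (Fin n)) H) f ∧ ∑ v, f v = 3 := by
  set i0 : Fin n := ⟨0, by omega⟩ with hi0
  set i1 : Fin n := ⟨1, by omega⟩ with hi1
  set i2 : Fin n := ⟨2, by omega⟩ with hi2
  have h01 : i0 ≠ i1 := by simp [hi0, hi1, Fin.ext_iff]
  have h02 : i0 ≠ i2 := by simp [hi0, hi2, Fin.ext_iff]
  have h12 : i1 ≠ i2 := by simp [hi1, hi2, Fin.ext_iff]
  set x0 : Fin n × β := (i0, a)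
  set x1 : Fin n × β := (i1, a)
  set x2 : Fin n × β := (i2, a)
  have hx01 : x0 ≠ x1 := fun h => h01 (congrArg Prod.fst h)
  have hx02 : x0 ≠ x2 := fun h => h02 (congrArg Prod.fst h)
  have hx12 : x1 ≠ x2 := fun h => h12 (congrArg Prod.fst h)
  refine ⟨fun p => if p = x0 ∨ p = x1 ∨ p = x2 then 1 else 0, ⟨?_, ?_⟩, ?_⟩
  · intro v; by_cases h : v = x0 ∨ v = x1 ∨ v = x2 <;> simp [h]
  · intro v hv
    have hv0 : v ≠ x0 := fun h => by simp [h] at hv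
    have hv1 : v ≠ x1 := fun h => by simp [h] at hv
    have hv2 : v ≠ x2 := fun h => by simp [h] at hv
    -- choose defender u and two backup vertices y z with distinct columns
    obtain ⟨u, y, z, hadj, hu, hy, hz, hyz, huy, huz⟩ :
        ∃ u y z : Fin n × β,
          (lexProd (⊤ : SimpleGraph (Fin n)) H).Adj u v ∧
          (u = x0 ∨ u = x1 ∨ u = x2) ∧ (y = x0 ∨ y = x1 ∨ y = x2) ∧
          (z = x0 ∨ z = x1 ∨ z = x2) ∧ y.1 ≠ z.1 ∧ u ≠ y ∧ u ≠ z := by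
      by_cases hc : v.1 = i0
      · exact ⟨x1, x0, x2, (lex_adj _ _).mpr (Or.inl (by simp [x1, hc, h01.symm])),
          by tauto, by tauto, by tauto, h02, hx01.symm, hx12⟩
      · exact ⟨x0, x1, x2, (lex_adj _ _).mpr (Or.inl (by simp [x0]; exact fun h => hc h.symm)),
          by tauto, by tauto, by tauto, h12, hx01, hx02⟩
    refine ⟨u, hadj, by simp [hu], ?_⟩
    intro w
    by_cases hwy : w.1 ≠ y.1
    · refine not_und_adj _ _ ((lex_adj w y).mpr (Or.inl hwy)) ?_
      have : y ≠ v := by rcases hy with rfl | rfl | rfl <;> [exact hv0.symm; exact hv1.symm; exact hv2.symm]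
      simp [Function.update_apply, huy.symm, this, hy]
    · push_neg at hwy
      refine not_und_adj _ _ ((lex_adj w z).mpr (Or.inl (by rw [hwy]; exact hyz))) ?_
      have : z ≠ v := by rcases hz with rfl | rfl | rfl <;> [exact hv0.symm; exact hv1.symm; exact hv2.symm]
      simp [Function.update_apply, huz.symm, this, hz]
  · rw [← Finset.sum_filter]
    have hfe : Finset.univ.filter (fun p => p = x0 ∨ p = x1 ∨ p = x2) = {x0, x1, x2} := by
      ext p; simp
    rw [hfe, Finset.sum_const, smul_eq_mul, mul_one,
      Finset.card_insert_of_notMem (by simp [hx01, hx02]),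
      Finset.card_insert_of_notMem (by simp [hx12]), Finset.card_singleton]

lemma caseA (hn : 3 ≤ n) (g : β → ℕ) (hg : IsWRDF H g) (hsum : ∑ b, g b = 2) :
    ∃ f : Fin n × β → ℕ,
      IsWRDF (lexProd (⊤ : SimpleGraph (Fin n)) H) f ∧ ∑ v, f v = 2 := by
  set i0 : Fin n := ⟨0, by omega⟩ with hi0
  refine ⟨fun p => if p.1 = i0 then g p.2 else 0, ⟨?_, ?_⟩, ?_⟩
  · intro v
    by_cases h : v.1 = i0 <;> simp [h, hg.1 v.2]
  · rintro ⟨j, c⟩ hv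
    by_cases hj : j = i0
    · subst hj
      have hgc : g c = 0 := by simpa using hv
      obtain ⟨x, hxadj, hx1, hw⟩ := hg.2 c hgc
      have hxc : x ≠ c := hxadj.ne
      refine ⟨(i0, x), (lex_adj _ _).mpr (Or.inr ⟨rfl, hxadj⟩), by simpa using hx1, ?_⟩
      rintro ⟨k, d⟩ ⟨hund1, hund2⟩
      by_cases hk : k = i0
      · subst hk
        refine hw d ⟨?_, ?_⟩
        · simp only [Function.update_apply, Prod.mk.injEq] at hund1 ⊢
          by_cases hdx : d = x
          · simpa [hdx] using hund1
          · by_cases hdc : d = c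
            · simp [hdx, hdc, Ne.symm hxc] at hund1
            · simpa [hdx, hdc] using hund1
        · intro e hde
          have h2 := hund2 (i0, e) ((lex_adj _ _).mpr (Or.inr ⟨rfl, hde⟩))
          simp only [Function.update_apply, Prod.mk.injEq] at h2 ⊢
          by_cases hex : e = x
          · simpa [hex] using h2
          · by_cases hec : e = c
            · simp [hex, hec, Ne.symm hxc] at h2
            · simpa [hex, hec] using h2
      · have h2 := hund2 (i0, c) ((lex_adj _ _).mpr (Or.inl hk))
        simp [Function.update_apply, Prod.mk.injEq, Ne.symm hxc] at h2
    · -- column j is empty; defender in column i0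
      have hne0 : ∃ x, g x ≠ 0 := by
        by_contra h
        push_neg at h
        simp [h] at hsum
      obtain ⟨x, hx⟩ := hne0
      refine ⟨(i0, x), (lex_adj _ _).mpr (Or.inl (fun h => hj h.symm)),
        by simpa using Nat.one_le_iff_ne_zero.mpr hx, ?_⟩
      have hcolpos : ∃ e, (e = x ∧ g x = 2) ∨ (e ≠ x ∧ g e ≠ 0) := by
        by_cases hgx : g x = 2
        · exact ⟨x, Or.inl ⟨rfl, hgx⟩⟩
        · have hgx1 : g x = 1 := by have := hg.1 x; omega
          have h2 : ∑ y ∈ Finset.univ.erase x, g y = 1 := by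
            have := Finset.add_sum_erase Finset.univ g (Finset.mem_univ x)
            omega
          obtain ⟨y, hymem, hyne⟩ := Finset.exists_ne_zero_of_sum_ne_zero
            (by omega : ∑ y ∈ Finset.univ.erase x, g y ≠ 0)
          exact ⟨y, Or.inr ⟨(Finset.mem_erase.mp hymem).1, hyne⟩⟩
      obtain ⟨e, hcase⟩ := hcolpos
      rintro ⟨k, d⟩ ⟨hund1, hund2⟩
      by_cases hk : k = i0
      · have h2 := hund2 (j, c) ((lex_adj _ _).mpr (Or.inl (by rw [hk]; exact fun h => hj h.symm)))
        simp [Function.update_apply, Prod.mk.injEq, hj] at h2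
      · have h2 := hund2 (i0, e) ((lex_adj _ _).mpr (Or.inl hk))
        simp only [Function.update_apply, Prod.mk.injEq] at h2
        rcases hcase with ⟨rfl, hgx2⟩ | ⟨hex, hge⟩
        · simp [hgx2] at h2
        · have hji : ¬ (i0 = j) := fun h => hj h.symm
          simp [hex, hji] at h2
          exact hge h2
  · rw [Fintype.sum_prod_type]
    have : ∀ i : Fin n, (∑ b, if i = i0 then g b else 0) = if i = i0 then 2 else 0 := by
      intro i
      by_cases h : i = i0 <;> simp [h, hsum]
    simp only [this]
    rw [Finset.sum_ite_eq' Finset.univ i0 (fun _ => 2)]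
    simp

noncomputable def upd {γ : Type*} (f : γ → ℕ) (x : γ) (v : ℕ) : γ → ℕ :=
  @Function.update γ (fun _ => ℕ) (fun a b => Classical.propDecidable (a = b)) f x v

lemma caseB_defend (s t : Fin n) (hst : s ≠ t) (a : β)
    (hcl : ∀ b c : β, ¬ (b = a ∨ H.Adj a b) → ¬ (c = a ∨ H.Adj a c) →
      b ≠ c → H.Adj b c)
    (f : Fin n × β → ℕ)
    (hval : ∀ p, f p = if p = (s, a) ∨ p = (t, a) then 1 else 0)
    (v : Fin n × β) (hv : f v = 0) (hvt0 : v.1 ≠ t) :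
    ∃ u, (lexProd (⊤ : SimpleGraph (Fin n)) H).Adj u v ∧ 1 ≤ f u ∧
      ∀ w, ¬ Undefended (lexProd (⊤ : SimpleGraph (Fin n)) H)
        (upd (upd f v 1) u (f u - 1)) w := by
  obtain ⟨j, c⟩ := v
  have hjt : j ≠ t := hvt0
  have htj : ¬ (t = j) := fun h => hjt h.symm
  have hvs : (j, c) ≠ (s, a) := fun h => by simp [hval, h] at hv
  have hvt' : (j, c) ≠ (t, a) := fun h => by simp [hval, h] at hv
  have hfs : f (s, a) = 1 := by simp [hval]
  have hft : f (t, a) = 1 := by simp [hval]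
  by_cases hjs : j = s
  · have hca : c ≠ a := fun h => hvs (by rw [h, hjs])
    have hfja : f (j, a) = 1 := by simp [hval, hjs]
    by_cases hac : H.Adj a c
    · -- defender (j,a) in same column
      refine ⟨(j, a), (lex_adj _ _).mpr (Or.inr ⟨rfl, hac⟩), by simp [hfja], ?_⟩
      rintro ⟨k, d⟩ ⟨hund1, hund2⟩
      by_cases hkt : k = t
      · have h2 := hund2 (j, c) ((lex_adj _ _).mpr (Or.inl (by rw [hkt]; exact htj)))
        simp [upd, Function.update_apply, Prod.mk.injEq, hjt, hca] at h2
      · have h2 := hund2 (t, a) ((lex_adj _ _).mpr (Or.inl hkt))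
        simp [upd, Function.update_apply, Prod.mk.injEq, hjt, htj, hft] at h2
    · -- defender (t,a) in other column
      refine ⟨(t, a), (lex_adj _ _).mpr (Or.inl (fun h => hjt h.symm)), by simp [hft], ?_⟩
      rintro ⟨k, d⟩ ⟨hund1, hund2⟩
      by_cases hks : k = j
      · by_cases hda : d = a
        · -- w = (j,a) itself is positive
          simp [upd, Function.update_apply, Prod.mk.injEq, hjt, hks, hda, htj,
            Ne.symm hca, hfja] at hund1
        · by_cases hadj : H.Adj a d
          · have h2 := hund2 (j, a) ((lex_adj _ _).mpr (Or.inr ⟨hks, hadj.symm⟩))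
            simp [upd, Function.update_apply, Prod.mk.injEq, hjt, htj, Ne.symm hca, hfja] at h2
          · by_cases hdc : d = c
            · simp [upd, Function.update_apply, Prod.mk.injEq, hjt, hks, hdc, htj] at hund1
            · have hadj2 : H.Adj c d := hcl c d
                (by rintro (h | h); exacts [hca h, hac h])
                (by rintro (h | h); exacts [hda h, hadj h])
                (fun h => hdc h.symm)
              have h2 := hund2 (j, c) ((lex_adj _ _).mpr (Or.inr ⟨hks, hadj2.symm⟩))
              simp [upd, Function.update_apply, Prod.mk.injEq, hjt, htj] at h2
      · have h2 := hund2 (j, a) ((lex_adj _ _).mpr (Or.inl hks))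
        simp [upd, Function.update_apply, Prod.mk.injEq, hjt, htj, Ne.symm hca, hfja] at h2
  · -- v in a third column: defender (s,a)
    refine ⟨(s, a), (lex_adj _ _).mpr (Or.inl (fun h => hjs h.symm)), by simp [hfs], ?_⟩
    rintro ⟨k, d⟩ ⟨hund1, hund2⟩
    by_cases hkt : k = t
    · have h2 := hund2 (j, c) ((lex_adj _ _).mpr (Or.inl (by rw [hkt]; exact htj)))
      simp [upd, Function.update_apply, Prod.mk.injEq, hjt, hjs] at h2
    · have h2 := hund2 (t, a) ((lex_adj _ _).mpr (Or.inl hkt))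
      simp [upd, Function.update_apply, Prod.mk.injEq, hjt, htj, Ne.symm hst, hft] at h2

lemma caseB (hn : 3 ≤ n) (a : β)
    (hcl : ∀ b c : β, ¬ (b = a ∨ H.Adj a b) → ¬ (c = a ∨ H.Adj a c) →
      b ≠ c → H.Adj b c) :
    ∃ f : Fin n × β → ℕ,
      IsWRDF (lexProd (⊤ : SimpleGraph (Fin n)) H) f ∧ ∑ v, f v = 2 := by
  set i0 : Fin n := ⟨0, by omega⟩ with hi0
  set i1 : Fin n := ⟨1, by omega⟩ with hi1
  have h01 : i0 ≠ i1 := by simp [hi0, hi1, Fin.ext_iff]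
  refine ⟨fun p => if p = (i0, a) ∨ p = (i1, a) then 1 else 0, ⟨?_, ?_⟩, ?_⟩
  · intro v; by_cases h : v = (i0, a) ∨ v = (i1, a) <;> simp [h]
  · intro v hv
    by_cases hv1 : v.1 = i1
    · exact caseB_defend i1 i0 h01.symm a hcl _
        (fun p => if_congr or_comm rfl rfl) v hv
        (by rw [hv1]; exact h01.symm)
    · exact caseB_defend i0 i1 h01 a hcl _ (fun p => rfl) v hv hv1
  · rw [← Finset.sum_filter]
    have hfe : Finset.univ.filter (fun p : Fin n × β => p = (i0, a) ∨ p = (i1, a))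
        = {(i0, a), (i1, a)} := by
      ext p; simp
    rw [hfe, Finset.sum_const, smul_eq_mul, mul_one,
      Finset.card_insert_of_notMem (by simp [h01]), Finset.card_singleton]

lemma fwd_shape1 (f : Fin n × β → ℕ)
    (hf : IsWRDF (lexProd (⊤ : SimpleGraph (Fin n)) H) f)
    (i : Fin n) (a : β) (hrest : ∀ y, y ≠ (i, a) → f y = 0) :
    ∀ b, b = a ∨ H.Adj a b := by
  intro b
  by_contra hb
  push_neg at hb
  obtain ⟨hb1, hb2⟩ := hb
  have hfb : f (i, b) = 0 := hrest _ (fun h => hb1 (congrArg Prod.snd h))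
  obtain ⟨u, hadj, hu1, -⟩ := hf.2 _ hfb
  have hux : u = (i, a) := by
    by_contra h
    have := hrest u h
    omega
  subst hux
  rcases (lex_adj _ _).mp hadj with h | ⟨-, h⟩
  · exact h rfl
  · exact hb2 h

lemma fwd_shape2_same (f : Fin n × β → ℕ)
    (hf : IsWRDF (lexProd (⊤ : SimpleGraph (Fin n)) H) f)
    (i : Fin n) (a b : β) (hab : a ≠ b)
    (hfa : f (i, a) = 1) (hfb : f (i, b) = 1)
    (hrest : ∀ z, z ≠ (i, a) → z ≠ (i, b) → f z = 0) :
    ∃ g : β → ℕ, IsWRDF H g ∧ ∑ x, g x = 2 := by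
  refine ⟨fun c => if c = a ∨ c = b then 1 else 0, ⟨?_, ?_⟩, ?_⟩
  · intro c; by_cases h : c = a ∨ c = b <;> simp [h]
  · intro c hc
    have hcab : ¬ (c = a ∨ c = b) := by intro h; simp [h] at hc
    push_neg at hcab
    obtain ⟨hca, hcb⟩ := hcab
    have hfic : f (i, c) = 0 := hrest _
      (fun h => hca (congrArg Prod.snd h)) (fun h => hcb (congrArg Prod.snd h))
    obtain ⟨u, hadj, hu1, hw⟩ := hf.2 _ hfic
    have hu : u = (i, a) ∨ u = (i, b) := by
      by_contra h
      push_neg at h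
      have := hrest u h.1 h.2
      omega
    have hui : u.1 = i := by rcases hu with rfl | rfl <;> rfl
    have hfu : f u = 1 := by rcases hu with rfl | rfl <;> assumption
    have hue : u.2 = a ∨ u.2 = b := by rcases hu with rfl | rfl <;> simp
    have hupair : u = (i, u.2) := by rw [← hui]
    have hadjH : H.Adj u.2 c := by
      rcases (lex_adj u (i, c)).mp hadj with h | ⟨-, h⟩
      · exact absurd hui h
      · exact h
    refine ⟨u.2, hadjH, by simp [hue], ?_⟩
    rintro d ⟨hund1, hund2⟩
    simp only [Function.update_apply] at hund1
    refine hw (i, d) ⟨?_, ?_⟩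
    · -- show f' (i, d) = 0
      by_cases hdu : d = u.2
      · have h4 : ((i:Fin n), d) = u := by rw [hupair, hdu]
        simp [Function.update_apply, h4, hfu]
      · by_cases hdc : d = c
        · rw [hdc] at hdu
          simp [hdc, hdu] at hund1
        · simp only [hdu, hdc, if_false] at hund1
          have hd : ¬ (d = a ∨ d = b) := by
            intro h
            simp [h] at hund1
          push_neg at hd
          have hne1 : ((i:Fin n), d) ≠ u := fun h => hdu (by rw [hupair] at h; exact congrArg Prod.snd h)
          have hne2 : ((i:Fin n), d) ≠ (i, c) := fun h => hdc (congrArg Prod.snd h)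
          have hfz : f (i, d) = 0 := hrest (i, d)
            (fun h => hd.1 (congrArg Prod.snd h)) (fun h => hd.2 (congrArg Prod.snd h))
          simp [Function.update_apply, hne1, hne2, hfz]
    · rintro ⟨k, e⟩ hp
      by_cases hk : k = i
      · subst hk
        have hde : H.Adj d e := by
          rcases (lex_adj _ _).mp hp with h | ⟨-, h⟩
          · exact absurd rfl h
          · exact h
        have h2 := hund2 e hde
        simp only [Function.update_apply] at h2
        by_cases heu : e = u.2
        · have h4 : ((k:Fin n), e) = u := by rw [hupair, heu]
          simp [Function.update_apply, h4, hfu]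
        · by_cases hec : e = c
          · rw [hec] at heu
            simp [hec, heu] at h2
          · simp only [heu, hec, if_false] at h2
            have he : ¬ (e = a ∨ e = b) := by
              intro h
              simp [h] at h2
            push_neg at he
            have hne1 : ((k:Fin n), e) ≠ u := fun h => heu (by rw [hupair] at h; exact congrArg Prod.snd h)
            have hne2 : ((k:Fin n), e) ≠ (k, c) := fun h => hec (congrArg Prod.snd h)
            have hfz : f (k, e) = 0 := hrest (k, e)
              (fun h => he.1 (congrArg Prod.snd h)) (fun h => he.2 (congrArg Prod.snd h))
            simp [Function.update_apply, hne1, hne2, hfz]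
      · have hne1 : ((k:Fin n), e) ≠ u := fun h => hk (by rw [hupair] at h; exact congrArg Prod.fst h)
        have hne2 : ((k:Fin n), e) ≠ (i, c) := fun h => hk (congrArg Prod.fst h)
        have hfz : f (k, e) = 0 := hrest (k, e)
          (fun h => hk (congrArg Prod.fst h)) (fun h => hk (congrArg Prod.fst h))
        simp [Function.update_apply, hne1, hne2, hfz]
  · rw [← Finset.sum_filter]
    have hfe : Finset.univ.filter (fun c : β => c = a ∨ c = b) = {a, b} := by
      ext c; simp
    rw [hfe, Finset.sum_const, smul_eq_mul, mul_one,
      Finset.card_insert_of_notMem (by simp [hab]), Finset.card_singleton]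

lemma fwd_shape2_diff (f : Fin n × β → ℕ)
    (hf : IsWRDF (lexProd (⊤ : SimpleGraph (Fin n)) H) f)
    (i j : Fin n) (a b : β) (hij : i ≠ j)
    (hfa : f (i, a) = 1) (hfb : f (j, b) = 1)
    (hrest : ∀ z, z ≠ (i, a) → z ≠ (j, b) → f z = 0) :
    ∀ b' c' : β, ¬ (b' = a ∨ H.Adj a b') → ¬ (c' = a ∨ H.Adj a c') →
      b' ≠ c' → H.Adj b' c' := by
  intro b' c' hb hc hbc
  push_neg at hb hc
  have hv0 : f (i, b') = 0 := hrest _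
    (fun h => hb.1 (congrArg Prod.snd h)) (fun h => hij (congrArg Prod.fst h))
  obtain ⟨u, hadj, hu1, hw⟩ := hf.2 _ hv0
  have hu : u = (i, a) ∨ u = (j, b) := by
    by_contra h
    push_neg at h
    have := hrest u h.1 h.2
    omega
  have huy : u = (j, b) := by
    rcases hu with rfl | rfl
    · rcases (lex_adj _ _).mp hadj with h | ⟨-, h⟩
      · exact absurd rfl h
      · exact absurd h hb.2
    · rfl
  subst huy
  by_contra hnadj
  refine hw (i, c') ⟨?_, ?_⟩
  · have hne1 : ((i:Fin n), c') ≠ (j, b) := fun h => hij (congrArg Prod.fst h)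
    have hne2 : ((i:Fin n), c') ≠ (i, b') := fun h => hbc ((congrArg Prod.snd h).symm)
    have hfz : f (i, c') = 0 := hrest (i, c')
      (fun h => hc.1 (congrArg Prod.snd h)) (fun h => hij (congrArg Prod.fst h))
    simp [Function.update_apply, hne1, hne2, hfz]
  · rintro ⟨k, e⟩ hp
    by_cases h1 : ((k:Fin n), e) = (j, b)
    · simp [Function.update_apply, h1, hfb]
    · by_cases h2 : ((k:Fin n), e) = (i, b')
      · exfalso
        rw [h2] at hp
        rcases (lex_adj _ _).mp hp with h | ⟨-, h⟩
        · exact h rfl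
        · exact hnadj h.symm
      · by_cases h3 : ((k:Fin n), e) = (i, a)
        · exfalso
          rw [h3] at hp
          rcases (lex_adj _ _).mp hp with h | ⟨-, h⟩
          · exact h rfl
          · exact hc.2 h.symm
        · simp [Function.update_apply, h1, h2, hrest _ h3 h1]

end Prod

lemma main_assembly {β : Type*} [Fintype β]
    (n : ℕ) (hn : 3 ≤ n) (H : SimpleGraph β)
    (hH : ∃ a b : β, a ≠ b ∧ ¬ H.Adj a b) :
    (2 ≤ weakRomanNumber (lexProd (⊤ : SimpleGraph (Fin n)) H) ∧
      weakRomanNumber (lexProd (⊤ : SimpleGraph (Fin n)) H) ≤ 3) ∧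
    (weakRomanNumber (lexProd (⊤ : SimpleGraph (Fin n)) H) = 2 ↔
      (weakRomanNumber H = 2 ∨
        ∃ a : β, ∀ b c : β, ¬ (b = a ∨ H.Adj a b) → ¬ (c = a ∨ H.Adj a c) →
          b ≠ c → H.Adj b c)) := by
  classical
  obtain ⟨a0, b0, hab0, hnadj0⟩ := hH
  set SP : Set ℕ := {k | ∃ f : Fin n × β → ℕ,
    IsWRDF (lexProd (⊤ : SimpleGraph (Fin n)) H) f ∧ ∑ v, f v = k} with hSP
  set SH : Set ℕ := {k | ∃ g : β → ℕ, IsWRDF H g ∧ ∑ v, g v = k} with hSH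
  have hWP : weakRomanNumber (lexProd (⊤ : SimpleGraph (Fin n)) H) = sInf SP := rfl
  have hWH : weakRomanNumber H = sInf SH := rfl
  have hprodnc : ∃ p q : Fin n × β, p ≠ q ∧
      ¬ (lexProd (⊤ : SimpleGraph (Fin n)) H).Adj p q := by
    refine ⟨(⟨0, by omega⟩, a0), (⟨0, by omega⟩, b0),
      fun h => hab0 (congrArg Prod.snd h), ?_⟩
    rw [lex_adj]
    rintro (h | ⟨-, h⟩)
    · exact h rfl
    · exact hnadj0 h
  have hmem3 : (3 : ℕ) ∈ SP := ub3 hn a0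
  have hlbP : ∀ k ∈ SP, 2 ≤ k := by
    rintro k ⟨f, hf, rfl⟩
    exact wrdf_lb _ hprodnc f hf
  have hlbH : ∀ k ∈ SH, 2 ≤ k := by
    rintro k ⟨g, hg, rfl⟩
    exact wrdf_lb _ ⟨a0, b0, hab0, hnadj0⟩ g hg
  have hge2 : 2 ≤ sInf SP := le_csInf ⟨3, hmem3⟩ hlbP
  have hle3 : sInf SP ≤ 3 := Nat.sInf_le hmem3
  refine ⟨⟨hWP ▸ hge2, hWP ▸ hle3⟩, ?_⟩
  rw [hWP, hWH]
  constructor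
  · intro h2
    have h2mem : (2 : ℕ) ∈ SP := h2 ▸ Nat.sInf_mem ⟨3, hmem3⟩
    obtain ⟨f, hf, hsum⟩ := h2mem
    rcases shape_two f hf.1 hsum with ⟨⟨i, a⟩, hx2, hxr⟩ |
      ⟨⟨i, a⟩, ⟨j, b⟩, hxy, hx1, hy1, hr⟩
    · right
      refine ⟨a, fun b c hb _ _ => absurd (fwd_shape1 f hf i a hxr b) hb⟩
    · by_cases hcol : i = j
      · subst hcol
        left
        have hab : a ≠ b := fun h => hxy (by rw [h])
        obtain ⟨g, hg, hgsum⟩ := fwd_shape2_same f hf i a b hab hx1 hy1 hr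
        exact le_antisymm (Nat.sInf_le ⟨g, hg, hgsum⟩) (le_csInf ⟨2, g, hg, hgsum⟩ hlbH)
      · right
        exact ⟨a, fwd_shape2_diff f hf i j a b hcol hx1 hy1 hr⟩
  · rintro (hH2 | ⟨a, hcl⟩)
    · have hneH : SH.Nonempty := by
        by_contra h
        rw [Set.not_nonempty_iff_eq_empty] at h
        rw [h, Nat.sInf_empty] at hH2
        exact absurd hH2 (by omega)
      have h2H : (2 : ℕ) ∈ SH := hH2 ▸ Nat.sInf_mem hneH
      obtain ⟨g, hg, hgs⟩ := h2H
      obtain ⟨f, hf, hfs⟩ := caseA hn g hg hgs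
      exact le_antisymm (Nat.sInf_le ⟨f, hf, hfs⟩) hge2
    · obtain ⟨f, hf, hfs⟩ := caseB hn a hcl
      exact le_antisymm (Nat.sInf_le ⟨f, hf, hfs⟩) hge2

/-- For `n ≥ 3` and a noncomplete graph `H`,
`2 ≤ γ_r(K_n∘H) ≤ 3`, and `γ_r(K_n∘H) = 2` iff `γ_r(H) = 2` or some vertex
`a` of `H` is such that the subgraph induced by `V(H) \ N[a]` is a clique. -/
theorem weakRoman_lexProd_completeGraph {β : Type*} [Fintype β]
    (n : ℕ) (hn : 3 ≤ n) (H : SimpleGraph β)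
    (hH : ∃ a b : β, a ≠ b ∧ ¬ H.Adj a b) :
    (2 ≤ weakRomanNumber (lexProd (⊤ : SimpleGraph (Fin n)) H) ∧
      weakRomanNumber (lexProd (⊤ : SimpleGraph (Fin n)) H) ≤ 3) ∧
    (weakRomanNumber (lexProd (⊤ : SimpleGraph (Fin n)) H) = 2 ↔
      (weakRomanNumber H = 2 ∨
        ∃ a : β, ∀ b c : β, ¬ (b = a ∨ H.Adj a b) → ¬ (c = a ∨ H.Adj a c) →
          b ≠ c → H.Adj b c)) :=
  main_assembly n hn H hH
end

section
/- For any integer n ≥ 3 and any graph H with γ(H) ≥ 4, γ_r(C_n∘H) = n, where C_n is the cycle graph on n vertices. -/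
open Finset
open scoped Classical

/-! ### Auxiliary lemmas -/

open Fin.CommRing

lemma wr_update_ne {γ : Type*} (g : γ → ℕ) (p : γ) (v : ℕ) (q : γ) (h : q ≠ p) :
    Function.update g p v q = g q := Function.update_of_ne h v g

lemma wr_update_eq {γ : Type*} (g : γ → ℕ) (p : γ) (v : ℕ) :
    Function.update g p v p = v := Function.update_self p v g


/-- If a graph has domination number at least 4, every set of at most 3 vertices
fails to dominate some vertex. -/
lemma wr_dom_escape {β : Type*} [Fintype β] (H : SimpleGraph β) (hH : 4 ≤ domNumber H)
    (S : Finset β) (hS : S.card ≤ 3) :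
    ∃ z, z ∉ S ∧ ∀ x ∈ S, ¬ H.Adj x z := by
  by_contra hcon
  push_neg at hcon
  have hdom : IsDomSet H S := fun v hv => hcon v hv
  have hle : domNumber H ≤ S.card := Nat.sInf_le ⟨S, hdom, rfl⟩
  omega

lemma wr_card_filter_le_sum {β : Type*} [Fintype β] (g : β → ℕ) :
    (univ.filter fun x => g x ≠ 0).card ≤ ∑ x, g x := by
  calc (univ.filter fun x => g x ≠ 0).card
      = ∑ x ∈ univ.filter fun x => g x ≠ 0, 1 := by simp
    _ ≤ ∑ x ∈ univ.filter fun x => g x ≠ 0, g x := by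
        refine Finset.sum_le_sum fun x hx => ?_
        simp only [Finset.mem_filter] at hx
        omega
    _ ≤ ∑ x, g x := Finset.sum_le_sum_of_subset (Finset.filter_subset _ _)

/-- The purely combinatorial counting lemma on the cycle `Fin (m+3)`. -/
lemma wr_counting (m : ℕ) (w : Fin (m+3) → ℕ)
    (h : ∀ b : Fin (m+3), 4 ≤ w b ∨
      ((2 ≤ w (b+1) ∨ (w (b+1) = 1 ∧ (1 ≤ w (b-1) ∨ 3 ≤ w b))) ∨
       (2 ≤ w (b-1) ∨ (w (b-1) = 1 ∧ (1 ≤ w (b+1) ∨ 3 ≤ w b))))) :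
    m + 3 ≤ ∑ a, w a := by
  have hloc : ∀ c : Fin (m+3), 6 ≤ w (c-2) + w (c-1) + 2 * w c + w (c+1) + w (c+2) := by
    intro c
    have h1 := h (c-1); have h2 := h c; have h3 := h (c+1)
    rw [show (c-1+1 : Fin (m+3)) = c by ring, show (c-1-1 : Fin (m+3)) = c-2 by ring] at h1
    rw [show (c+1+1 : Fin (m+3)) = c+2 by ring, show (c+1-1 : Fin (m+3)) = c by ring] at h3
    omega
  have hsum : ∑ c, (w (c-2) + w (c-1) + 2 * w c + w (c+1) + w (c+2)) = 6 * ∑ a, w a := by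
    have e : ∀ d : Fin (m+3), ∑ c, w (c + d) = ∑ a, w a := fun d =>
      Fintype.sum_equiv (Equiv.addRight d) _ _ (fun c => rfl)
    simp only [sub_eq_add_neg, Finset.sum_add_distrib, ← Finset.mul_sum, e]
    ring
  have hle : 6 * (m+3) ≤ 6 * ∑ a, w a := by
    calc 6 * (m+3) = ∑ _c : Fin (m+3), 6 := by
          simp [Finset.card_univ, mul_comm]
      _ ≤ ∑ c, (w (c-2) + w (c-1) + 2 * w c + w (c+1) + w (c+2)) :=
          Finset.sum_le_sum fun c _ => hloc c
      _ = 6 * ∑ a, w a := hsum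
  omega

/-- Key structural fact extracted from a WRDF on `C_n ∘ H`. -/
lemma wr_column_key {β : Type*} [Fintype β] (H : SimpleGraph β) (hH : 4 ≤ domNumber H)
    (m : ℕ) (f : Fin (m+3) × β → ℕ)
    (hf : IsWRDF (lexProd (SimpleGraph.cycleGraph (m+3)) H) f) (b : Fin (m+3)) :
    4 ≤ (∑ x, f (b, x)) ∨
      ((2 ≤ ∑ x, f (b+1, x) ∨ ((∑ x, f (b+1, x)) = 1 ∧ (1 ≤ ∑ x, f (b-1, x) ∨ 3 ≤ ∑ x, f (b, x)))) ∨
       (2 ≤ ∑ x, f (b-1, x) ∨ ((∑ x, f (b-1, x)) = 1 ∧ (1 ≤ ∑ x, f (b+1, x) ∨ 3 ≤ ∑ x, f (b, x))))) := by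
  by_cases h4 : 4 ≤ ∑ x, f (b, x)
  · exact Or.inl h4
  right
  have hw3 : ∑ x, f (b, x) ≤ 3 := by omega
  -- find a vertex of column b which is not dominated inside the column
  obtain ⟨y, hyS, hyadj⟩ := wr_dom_escape H hH (univ.filter fun x => f (b, x) ≠ 0)
    (le_trans (wr_card_filter_le_sum _) hw3)
  have hy0 : f (b, y) = 0 := by
    by_contra h
    exact hyS (Finset.mem_filter.mpr ⟨Finset.mem_univ _, h⟩)
  have hyall : ∀ x, H.Adj x y → f (b, x) = 0 := by
    intro x hx
    by_contra h
    exact hyadj x (Finset.mem_filter.mpr ⟨Finset.mem_univ _, h⟩) hx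
  obtain ⟨u, huadj, hfu, hnound⟩ := hf.2 (b, y) hy0
  have hcyc : (SimpleGraph.cycleGraph (m+3)).Adj u.1 b := by
    rcases huadj with h | ⟨h1, h2⟩
    · exact h
    · exfalso
      have h1' : u.1 = b := h1
      have hu' : u = (b, u.2) := by rw [← h1']
      rw [hu', hyall u.2 h2] at hfu
      omega
  rw [SimpleGraph.cycleGraph_adj] at hcyc
  have h20 : (2 : Fin (m+3)) ≠ 0 := by simp [Fin.ext_iff, Nat.mod_eq_of_lt (show 2 < m+3 by omega)]
  suffices hstep : ∀ ε : Fin (m+3), ε = 1 ∨ ε = -1 → u.1 = b + ε →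
      2 ≤ ∑ x, f (b+ε, x) ∨ ((∑ x, f (b+ε, x)) = 1 ∧ (1 ≤ ∑ x, f (b-ε, x) ∨ 3 ≤ ∑ x, f (b, x))) by
    rcases hcyc with h | h
    · exact Or.inl (hstep 1 (Or.inl rfl) (by rw [← h]; ring))
    · have := hstep (-1) (Or.inr rfl) (by rw [← h]; ring)
      rw [show (b + -1 : Fin (m+3)) = b - 1 by ring, show (b - -1 : Fin (m+3)) = b + 1 by ring] at this
      exact Or.inr this
  rintro ε hε hu1
  have hu' : u = (b + ε, u.2) := by rw [← hu1]
  have h1le : 1 ≤ ∑ x, f (b+ε, x) := by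
    have hs : f (b+ε, u.2) ≤ ∑ x, f (b+ε, x) := Finset.single_le_sum
      (f := fun x => f (b+ε, x)) (fun i _ => Nat.zero_le _) (Finset.mem_univ u.2)
    rw [← hu'] at hs
    omega
  by_cases h2 : 2 ≤ ∑ x, f (b+ε, x)
  · exact Or.inl h2
  right
  have hw1 : ∑ x, f (b+ε, x) = 1 := by omega
  refine ⟨hw1, ?_⟩
  by_contra hcon
  push_neg at hcon
  obtain ⟨hA', hB'⟩ := hcon
  have hA : ∑ x, f (b-ε, x) = 0 := by omega
  have hB : ∑ x, f (b, x) ≤ 2 := by omega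
  -- find the vertex z of column b which will be undefended after the move
  have hDcard : (insert y (univ.filter fun x => f (b, x) ≠ 0)).card ≤ 3 := by
    have h1 : (insert y (univ.filter fun x => f (b, x) ≠ 0)).card ≤
        (univ.filter fun x => f (b, x) ≠ 0).card + 1 := Finset.card_insert_le _ _
    have h2 := wr_card_filter_le_sum (fun x => f (b, x))
    omega
  obtain ⟨z, hzS, hzadj⟩ := wr_dom_escape H hH _ hDcard
  have hzy : z ≠ y := fun h => hzS (h ▸ Finset.mem_insert_self _ _)
  have hz0 : f (b, z) = 0 := by
    by_contra h
    exact hzS (Finset.mem_insert_of_mem (Finset.mem_filter.mpr ⟨Finset.mem_univ _, h⟩))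
  have hzadj' : ∀ x, H.Adj x z → x ≠ y ∧ f (b, x) = 0 := by
    intro x hx
    constructor
    · intro hxy
      subst hxy
      exact hzadj x (Finset.mem_insert_self _ _) hx
    · by_contra h
      exact hzadj x (Finset.mem_insert_of_mem (Finset.mem_filter.mpr ⟨Finset.mem_univ _, h⟩)) hx
  -- algebraic facts about ε
  have hε0 : ε ≠ 0 := by
    rcases hε with rfl | rfl
    · exact one_ne_zero
    · intro h; rw [neg_eq_zero] at h; exact one_ne_zero h
  have h2ε : ε + ε ≠ 0 := by
    rcases hε with rfl | rfl
    · rw [one_add_one_eq_two]; exact h20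
    · intro h
      rw [← neg_add, neg_eq_zero, one_add_one_eq_two] at h
      exact h20 h
  have hne1 : b + ε ≠ b := fun h => hε0 (add_eq_left.mp h)
  have hne3 : b - ε ≠ b := fun h => hε0 (sub_eq_self.mp h)
  have hne2 : b - ε ≠ b + ε := by
    intro h
    have key : (b+ε) - (b-ε) = ε + ε := by ring
    rw [← h, sub_self] at key
    exact h2ε key.symm
  have hnbr : ∀ c : Fin (m+3), (SimpleGraph.cycleGraph (m+3)).Adj b c → c = b + ε ∨ c = b - ε := by
    intro c hc
    rw [SimpleGraph.cycleGraph_adj] at hc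
    rcases hε with rfl | rfl
    · rcases hc with h | h
      · exact Or.inr (by rw [← h]; ring)
      · exact Or.inl (by rw [← h]; ring)
    · rcases hc with h | h
      · exact Or.inl (by rw [← h]; ring)
      · exact Or.inr (by rw [← h]; ring)
  -- (b, z) is undefended after the move, contradiction
  refine hnound (b, z) ⟨?_, ?_⟩
  · rw [wr_update_ne _ _ _ _ (fun h => by
        have := congrArg Prod.fst h
        rw [hu1] at this
        exact hne1 this.symm),
      wr_update_ne _ _ _ _ (fun h => hzy (congrArg Prod.snd h))]
    exact hz0
  · rintro ⟨c, t⟩ hadj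
    rcases hadj with hcyc' | ⟨hcb, hHt⟩
    · rcases hnbr c hcyc' with h | h
      · subst h
        by_cases ht : ((b + ε, t) : Fin (m+3) × β) = u
        · rw [ht, wr_update_eq]
          have hfu1 : f u = 1 := by
            have hle : f (b+ε, u.2) ≤ ∑ x, f (b+ε, x) :=
              Finset.single_le_sum (f := fun x => f (b+ε, x)) (fun i _ => Nat.zero_le _)
                (Finset.mem_univ u.2)
            rw [← hu'] at hle
            omega
          omega
        · rw [wr_update_ne _ _ _ _ ht,
            wr_update_ne _ _ _ _ (fun h => hne1 (congrArg Prod.fst h))]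
          have htu : t ≠ u.2 := by
            intro h
            exact ht (by rw [h, ← hu'])
          have hpair : f (b+ε, u.2) + f (b+ε, t) ≤ ∑ x, f (b+ε, x) := by
            have hp : ∑ x ∈ ({u.2, t} : Finset β), f (b+ε, x) ≤ ∑ x, f (b+ε, x) :=
              Finset.sum_le_sum_of_subset (Finset.subset_univ _)
            rwa [Finset.sum_pair (Ne.symm htu)] at hp
          have hfu' : 1 ≤ f (b+ε, u.2) := by
            have := hfu
            rw [hu'] at this
            exact this
          omega
      · subst h
        rw [wr_update_ne _ _ _ _ (fun h => by
            have := congrArg Prod.fst h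
            rw [hu1] at this
            exact hne2 this),
          wr_update_ne _ _ _ _ (fun h => hne3 (congrArg Prod.fst h))]
        exact (Finset.sum_eq_zero_iff.mp hA) t (Finset.mem_univ t)
    · -- same column
      subst hcb
      obtain ⟨hty, htf⟩ := hzadj' t (H.adj_symm hHt)
      rw [wr_update_ne _ _ _ _ (fun h => by
          have := congrArg Prod.fst h
          rw [hu1] at this
          exact hne1 this.symm),
        wr_update_ne _ _ _ _ (fun h => hty (congrArg Prod.snd h))]
      exact htf

/-- The natural weight-`n` WRDF on `C_n ∘ H`. -/
lemma wr_upper {β : Type*} [Fintype β] (H : SimpleGraph β) (b₀ : β) (m : ℕ) :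
    IsWRDF (lexProd (SimpleGraph.cycleGraph (m+3)) H)
      (fun p => if p.2 = b₀ then 1 else 0) := by
  set f₀ : Fin (m+3) × β → ℕ := fun p => if p.2 = b₀ then 1 else 0 with hf₀
  have h20 : (2 : Fin (m+3)) ≠ 0 := by simp [Fin.ext_iff, Nat.mod_eq_of_lt (show 2 < m+3 by omega)]
  constructor
  · intro v
    simp only [hf₀]
    split <;> omega
  · rintro ⟨a, b⟩ hv0
    have hbb : b ≠ b₀ := by
      intro h
      simp [hf₀, h] at hv0
    refine ⟨(a+1, b₀), Or.inl ?_, by simp [hf₀], ?_⟩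
    · exact SimpleGraph.cycleGraph_adj.mpr (Or.inl (by ring))
    · rintro ⟨c, x⟩ ⟨h0, hall⟩
      by_cases hc : c - 1 = a + 1
      · -- use (c+1, b₀)
        have hne_u : c + 1 ≠ a + 1 := by
          intro h
          have hca : c = a := by
            have := congrArg (fun x => x - 1) h
            simpa using this
          rw [hca] at hc
          have : (2 : Fin (m+3)) = 0 := by
            have h' : a - 1 - (a+1) = 0 := by rw [hc]; exact sub_self _
            rw [show (a - 1 - (a+1) : Fin (m+3)) = -2 by ring] at h'
            rw [← neg_eq_zero]; exact h'
          exact h20 this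
        have hthis := hall (c+1, b₀) (Or.inl (SimpleGraph.cycleGraph_adj.mpr (Or.inr (by ring))))
        rw [wr_update_ne _ _ _ _ (fun h => hne_u (congrArg Prod.fst h)),
          wr_update_ne _ _ _ _ (fun h => hbb (congrArg Prod.snd h).symm)] at hthis
        simp [hf₀] at hthis
      · -- use (c-1, b₀)
        have hthis := hall (c-1, b₀) (Or.inl (SimpleGraph.cycleGraph_adj.mpr (Or.inl (by ring))))
        rw [wr_update_ne _ _ _ _ (fun h => hc (congrArg Prod.fst h)),
          wr_update_ne _ _ _ _ (fun h => hbb (congrArg Prod.snd h).symm)] at hthis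
        simp [hf₀] at hthis

/-- For any `n ≥ 3` and any graph `H` with `γ(H) ≥ 4`,
`γ_r(C_n∘H) = n`. -/
theorem weakRoman_lexProd_cycle {β : Type*} [Fintype β]
    (n : ℕ) (hn : 3 ≤ n) (H : SimpleGraph β) (hH : 4 ≤ domNumber H) :
    weakRomanNumber (lexProd (SimpleGraph.cycleGraph n) H) = n := by
  obtain ⟨m, rfl⟩ : ∃ m, n = m + 3 := ⟨n - 3, by omega⟩
  -- β is nonempty
  have hne : Nonempty β := by
    by_contra h
    rw [not_nonempty_iff] at h
    have hd : IsDomSet H (∅ : Finset β) := fun v _ => (h.false v).elim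
    have : domNumber H ≤ 0 := Nat.sInf_le ⟨∅, hd, Finset.card_empty⟩
    omega
  obtain ⟨b₀⟩ := hne
  -- the upper bound function
  have hsum₀ : ∑ v : Fin (m+3) × β, (if v.2 = b₀ then 1 else 0) = m + 3 := by
    rw [Fintype.sum_prod_type]
    simp
  have hmemS : (m + 3) ∈ {k | ∃ f : Fin (m+3) × β → ℕ,
      IsWRDF (lexProd (SimpleGraph.cycleGraph (m+3)) H) f ∧ ∑ v, f v = k} :=
    ⟨_, wr_upper H b₀ m, hsum₀⟩
  -- the lower bound
  have hlower : ∀ f : Fin (m+3) × β → ℕ,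
      IsWRDF (lexProd (SimpleGraph.cycleGraph (m+3)) H) f → m + 3 ≤ ∑ v, f v := by
    intro f hf
    have := wr_counting m (fun a => ∑ x, f (a, x)) (fun b => wr_column_key H hH m f hf b)
    rw [Fintype.sum_prod_type]
    exact this
  have hget := Nat.sInf_mem (⟨m + 3, hmemS⟩ : Set.Nonempty _)
  obtain ⟨f, hf, hsumf⟩ := hget
  refine le_antisymm (Nat.sInf_le hmemS) ?_
  exact le_trans (hlower f hf) (le_of_eq hsumf)
end

section
/- Let G be a noncomplete graph. Then γ_r(G) = 2 if and only if γ(G) = 1 or γ_s(G) = 2. -/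
open Finset
open scoped Classical

section Aux

variable {α : Type*} [Fintype α]

/-- Any WRDF on a noncomplete graph has weight at least 2. -/
lemma two_le_of_wrdf (G : SimpleGraph α) {a b : α} (hab : a ≠ b) (hnadj : ¬ G.Adj a b)
    (f : α → ℕ) (hf : IsWRDF G f) : 2 ≤ ∑ v, f v := by
  by_contra hcon
  push_neg at hcon
  have h01 : ∑ v, f v = 0 ∨ ∑ v, f v = 1 := by omega
  rcases h01 with h0 | h1
  · have hz : ∀ v, f v = 0 := fun v =>
      (Finset.sum_eq_zero_iff.mp h0) v (Finset.mem_univ v)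
    obtain ⟨u, _, h1, _⟩ := hf.2 a (hz a)
    have := hz u
    omega
  · -- there is a unique vertex with value 1
    obtain ⟨u, _, hu0⟩ : ∃ u ∈ Finset.univ, f u ≠ 0 :=
      Finset.exists_ne_zero_of_sum_ne_zero (by omega)
    have hule : f u ≤ 1 := h1 ▸ Finset.single_le_sum (f := f)
      (fun i _ => Nat.zero_le _) (Finset.mem_univ u)
    have hu1 : f u = 1 := by omega
    have herase : ∑ v ∈ Finset.univ.erase u, f v = 0 := by
      have := Finset.add_sum_erase Finset.univ f (Finset.mem_univ u)
      omega
    have hz : ∀ v, v ≠ u → f v = 0 := fun v hv =>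
      (Finset.sum_eq_zero_iff.mp herase) v (Finset.mem_erase.mpr ⟨hv, Finset.mem_univ v⟩)
    have honly : ∀ u' : α, 1 ≤ f u' → u' = u := by
      intro u' h
      by_contra h'
      have := hz u' h'
      omega
    have hadj : ∀ v, v ≠ u → G.Adj u v := by
      intro v hv
      obtain ⟨u', hadj', hge, _⟩ := hf.2 v (hz v hv)
      rwa [honly u' hge] at hadj'
    have hau : a ≠ u := by
      rintro rfl
      exact hnadj (hadj b (Ne.symm hab))
    have hbu : b ≠ u := by
      rintro rfl
      exact hnadj ((hadj a hab).symm)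
    obtain ⟨u', hadj', hge, hund⟩ := hf.2 a (hz a hau)
    have hu'u : u' = u := honly u' hge
    rw [hu'u] at hadj' hund
    refine hund b ⟨?_, ?_⟩
    · rw [Function.update_of_ne hbu, Function.update_of_ne (Ne.symm hab)]
      exact hz b hbu
    · intro x hx
      by_cases hxu : x = u
      · subst hxu
        rw [Function.update_self]
        omega
      · rw [Function.update_of_ne hxu]
        have hxa : x ≠ a := by
          rintro rfl
          exact hnadj hx.symm
        rw [Function.update_of_ne hxa]
        exact hz x hxu

/-- If some singleton dominates and the graph has a vertex, the domination number is 1. -/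
lemma domNumber_eq_one_of (G : SimpleGraph α) (a u : α) (hdom : IsDomSet G {u}) :
    domNumber G = 1 := by
  have hmem : (1 : ℕ) ∈ {k | ∃ D : Finset α, IsDomSet G D ∧ D.card = k} :=
    ⟨{u}, hdom, Finset.card_singleton u⟩
  refine le_antisymm (Nat.sInf_le hmem) ?_
  refine le_csInf ⟨1, hmem⟩ ?_
  rintro k ⟨D, hD, rfl⟩
  by_contra h
  have hD0 : D = ∅ := Finset.card_eq_zero.mp (by omega)
  subst hD0
  obtain ⟨u', hu', _⟩ := hD a (Finset.notMem_empty a)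
  exact Finset.notMem_empty u' hu'

/-- Given a WRDF of weight 2 on a noncomplete graph, the weak Roman number is 2. -/
lemma weakRomanNumber_eq_two_of (G : SimpleGraph α) {a b : α} (hab : a ≠ b)
    (hnadj : ¬ G.Adj a b) (f : α → ℕ) (hf : IsWRDF G f) (hsum : ∑ v, f v = 2) :
    weakRomanNumber G = 2 := by
  have hmem : (2 : ℕ) ∈ {k | ∃ f : α → ℕ, IsWRDF G f ∧ ∑ v, f v = k} := ⟨f, hf, hsum⟩
  refine le_antisymm (Nat.sInf_le hmem) ?_
  refine le_csInf ⟨2, hmem⟩ ?_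
  rintro k ⟨g, hg, rfl⟩
  exact two_le_of_wrdf G hab hnadj g hg

end Aux

/-- For a noncomplete graph `G`, `γ_r(G) = 2` if and only if
`γ(G) = 1` or `γ_s(G) = 2`. -/
theorem weakRoman_eq_two_iff {α : Type*} [Fintype α] (G : SimpleGraph α)
    (hG : ∃ a b : α, a ≠ b ∧ ¬ G.Adj a b) :
    weakRomanNumber G = 2 ↔ (domNumber G = 1 ∨ secureDomNumber G = 2) := by
  obtain ⟨a, b, hab, hnadj⟩ := hG
  constructor
  · intro h
    have hne : {k | ∃ f : α → ℕ, IsWRDF G f ∧ ∑ v, f v = k}.Nonempty := by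
      by_contra h'
      rw [Set.not_nonempty_iff_eq_empty] at h'
      rw [weakRomanNumber, h', Nat.sInf_empty] at h
      omega
    have h2 : (2 : ℕ) ∈ {k | ∃ f : α → ℕ, IsWRDF G f ∧ ∑ v, f v = k} := by
      rw [← h]; exact Nat.sInf_mem hne
    obtain ⟨f, hf, hsum⟩ := h2
    have hs0 : ∑ v ∈ Finset.univ, f v ≠ 0 := by omega
    obtain ⟨u, -, hu0⟩ : ∃ u ∈ Finset.univ, f u ≠ 0 :=
      Finset.exists_ne_zero_of_sum_ne_zero hs0
    have hule : f u ≤ 2 := hf.1 u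
    have herase : f u + ∑ v ∈ Finset.univ.erase u, f v = ∑ v, f v :=
      Finset.add_sum_erase Finset.univ f (Finset.mem_univ u)
    rcases (show f u = 1 ∨ f u = 2 by omega) with h1 | h2
    · -- two vertices of weight 1 : secure domination
      have hrest : ∑ v ∈ Finset.univ.erase u, f v = 1 := by omega
      have hs1 : ∑ v ∈ Finset.univ.erase u, f v ≠ 0 := by omega
      obtain ⟨u₂, hu₂mem, hu₂0⟩ : ∃ u₂ ∈ Finset.univ.erase u, f u₂ ≠ 0 :=
        Finset.exists_ne_zero_of_sum_ne_zero hs1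
      have hu₂u : u₂ ≠ u := (Finset.mem_erase.mp hu₂mem).1
      have hu₂le : f u₂ ≤ 1 := hrest ▸ Finset.single_le_sum (f := f)
        (fun i _ => Nat.zero_le _) hu₂mem
      have hu₂1 : f u₂ = 1 := by omega
      have herase2 : f u₂ + ∑ v ∈ (Finset.univ.erase u).erase u₂, f v = 1 := by
        rw [Finset.add_sum_erase _ f hu₂mem]; exact hrest
      have hz0 : ∑ v ∈ (Finset.univ.erase u).erase u₂, f v = 0 := by omega
      have hz : ∀ v, v ≠ u → v ≠ u₂ → f v = 0 := by
        intro v hvu hvu₂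
        refine (Finset.sum_eq_zero_iff.mp hz0) v ?_
        exact Finset.mem_erase.mpr ⟨hvu₂, Finset.mem_erase.mpr ⟨hvu, Finset.mem_univ v⟩⟩
      set S : Finset α := {u, u₂} with hS
      have hmemS : ∀ x, x ∈ S ↔ (x = u ∨ x = u₂) := by
        intro x; simp [hS]
      have hfS1 : ∀ x ∈ S, f x = 1 := by
        intro x hx
        rcases (hmemS x).mp hx with rfl | rfl
        · exact h1
        · exact hu₂1
      have hfS0 : ∀ x, x ∉ S → f x = 0 := by
        intro x hx
        rw [hmemS] at hx
        push_neg at hx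
        exact hz x hx.1 hx.2
      have honly : ∀ x, f x ≠ 0 → x ∈ S := by
        intro x hx
        by_contra h'
        exact hx (hfS0 x h')
      have hdom : IsDomSet G S := by
        intro v hv
        obtain ⟨u', hadj', hge, -⟩ := hf.2 v (hfS0 v hv)
        exact ⟨u', honly u' (by omega), hadj'⟩
      have hsec : IsSecureDomSet G S := by
        refine ⟨hdom, ?_⟩
        intro v hv
        obtain ⟨u', hadj', hge, hund⟩ := hf.2 v (hfS0 v hv)
        have hu'S : u' ∈ S := honly u' (by omega)
        refine ⟨u', hu'S, hadj', ?_⟩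
        have hvu' : v ≠ u' := (G.ne_of_adj hadj').symm
        set T : Finset α := insert v (S.erase u') with hT
        set g : α → ℕ := Function.update (Function.update f v 1) u' (f u' - 1) with hg
        have hgT0 : ∀ x, x ∉ T → g x = 0 := by
          intro x hx
          have hxv : x ≠ v := by rintro rfl; exact hx (Finset.mem_insert_self _ _)
          by_cases hxu' : x = u'
          · subst hxu'
            rw [hg, Function.update_self, hfS1 x hu'S]
          · rw [hg, Function.update_of_ne hxu', Function.update_of_ne hxv]
            refine hfS0 x ?_
            intro hxS
            exact hx (Finset.mem_insert_of_mem (Finset.mem_erase.mpr ⟨hxu', hxS⟩))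
        have hgT1 : ∀ x ∈ T, g x ≠ 0 := by
          intro x hx
          rcases Finset.mem_insert.mp hx with rfl | hxe
          · rw [hg, Function.update_of_ne hvu', Function.update_self]; omega
          · obtain ⟨hxu', hxS⟩ := Finset.mem_erase.mp hxe
            have hxv : x ≠ v := by rintro rfl; exact hv hxS
            rw [hg, Function.update_of_ne hxu', Function.update_of_ne hxv, hfS1 x hxS]
            omega
        intro w hw
        by_contra hcon
        push_neg at hcon
        refine hund w ⟨hgT0 w hw, ?_⟩
        intro x hx
        by_cases hxT : x ∈ T
        · exact absurd hx.symm (hcon x hxT)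
        · exact hgT0 x hxT
      have hScard : S.card = 2 := Finset.card_pair hu₂u.symm
      have hmle : secureDomNumber G ≤ 2 := Nat.sInf_le ⟨S, hsec, hScard⟩
      have hmmem : secureDomNumber G ∈
          {k | ∃ S : Finset α, IsSecureDomSet G S ∧ S.card = k} :=
        Nat.sInf_mem ⟨2, S, hsec, hScard⟩
      obtain ⟨S', hS', hcS'⟩ := hmmem
      have hm0 : secureDomNumber G ≠ 0 := by
        intro h0
        have : S' = ∅ := Finset.card_eq_zero.mp (by omega)
        subst this
        obtain ⟨u', hu', -⟩ := hS'.1 a (Finset.notMem_empty a)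
        exact Finset.notMem_empty u' hu'
      rcases (show secureDomNumber G = 1 ∨ secureDomNumber G = 2 by omega) with hm | hm
      · left
        obtain ⟨u', rfl⟩ := Finset.card_eq_one.mp (by omega : S'.card = 1)
        exact domNumber_eq_one_of G a u' hS'.1
      · right; exact hm
    · -- a vertex of weight 2 : domination number 1
      have hz0 : ∑ v ∈ Finset.univ.erase u, f v = 0 := by omega
      have hz : ∀ v, v ≠ u → f v = 0 := by
        intro v hv
        refine (Finset.sum_eq_zero_iff.mp hz0) v ?_
        exact Finset.mem_erase.mpr ⟨hv, Finset.mem_univ v⟩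
      have hdom : IsDomSet G {u} := by
        intro v hv
        have hvu : v ≠ u := by simpa using hv
        obtain ⟨u', hadj', hge, -⟩ := hf.2 v (hz v hvu)
        have : u' = u := by
          by_contra h'
          have := hz u' h'
          omega
        subst this
        exact ⟨u', Finset.mem_singleton_self u', hadj'⟩
      left
      exact domNumber_eq_one_of G a u hdom
  · rintro (h | h)
    · -- domination number 1 gives a WRDF of weight 2
      have hne : {k | ∃ D : Finset α, IsDomSet G D ∧ D.card = k}.Nonempty := by
        by_contra h'
        rw [Set.not_nonempty_iff_eq_empty] at h'
        rw [domNumber, h', Nat.sInf_empty] at h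
        omega
      have h1 : (1 : ℕ) ∈ {k | ∃ D : Finset α, IsDomSet G D ∧ D.card = k} := by
        rw [← h]; exact Nat.sInf_mem hne
      obtain ⟨D, hdom, hcard⟩ := h1
      obtain ⟨u, rfl⟩ := Finset.card_eq_one.mp hcard
      have hadjall : ∀ v, v ≠ u → G.Adj u v := by
        intro v hv
        obtain ⟨u', hu', h'⟩ := hdom v (by simpa using hv)
        rwa [Finset.mem_singleton.mp hu'] at h'
      refine weakRomanNumber_eq_two_of G hab hnadj (fun v => if v = u then 2 else 0)
        ⟨?_, ?_⟩ ?_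
      · intro v; dsimp only; split <;> omega
      · intro v hv
        have hvu : v ≠ u := by
          rintro rfl; simp at hv
        refine ⟨u, hadjall v hvu, by simp, ?_⟩
        rintro w ⟨hw0, hwx⟩
        by_cases hwu : w = u
        · subst hwu
          rw [Function.update_self] at hw0
          simp at hw0
        · by_cases hwv : w = v
          · subst hwv
            rw [Function.update_of_ne hwu, Function.update_self] at hw0
            omega
          · have := hwx u (hadjall w hwu).symm
            rw [Function.update_self] at this
            simp at this
      · simp
    · -- secure domination number 2 gives a WRDF of weight 2
      have hne : {k | ∃ S : Finset α, IsSecureDomSet G S ∧ S.card = k}.Nonempty := by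
        by_contra h'
        rw [Set.not_nonempty_iff_eq_empty] at h'
        rw [secureDomNumber, h', Nat.sInf_empty] at h
        omega
      have h2 : (2 : ℕ) ∈ {k | ∃ S : Finset α, IsSecureDomSet G S ∧ S.card = k} := by
        rw [← h]; exact Nat.sInf_mem hne
      obtain ⟨S, hsec, hcard⟩ := h2
      refine weakRomanNumber_eq_two_of G hab hnadj (fun v => if v ∈ S then 1 else 0)
        ⟨?_, ?_⟩ ?_
      · intro v; dsimp only; split <;> omega
      · intro v hv
        have hvS : v ∉ S := by
          intro h'; simp [h'] at hv
        obtain ⟨u, huS, hadj, hTdom⟩ := hsec.2 v hvS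
        refine ⟨u, hadj, by simp [huS], ?_⟩
        set f : α → ℕ := fun v => if v ∈ S then 1 else 0 with hfdef
        have hvu : v ≠ u := (G.ne_of_adj hadj).symm
        set T : Finset α := insert v (S.erase u) with hT
        set g : α → ℕ := Function.update (Function.update f v 1) u (f u - 1) with hg
        have hgT0 : ∀ x, x ∉ T → g x = 0 := by
          intro x hx
          have hxv : x ≠ v := by rintro rfl; exact hx (Finset.mem_insert_self _ _)
          by_cases hxu : x = u
          · subst hxu
            rw [hg, Function.update_self, hfdef]
            simp [huS]
          · rw [hg, Function.update_of_ne hxu, Function.update_of_ne hxv, hfdef]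
            have hxS : x ∉ S := by
              intro hxS
              exact hx (Finset.mem_insert_of_mem (Finset.mem_erase.mpr ⟨hxu, hxS⟩))
            simp [hxS]
        have hgT1 : ∀ x ∈ T, g x ≠ 0 := by
          intro x hx
          rcases Finset.mem_insert.mp hx with rfl | hxe
          · rw [hg, Function.update_of_ne hvu, Function.update_self]; omega
          · obtain ⟨hxu, hxS⟩ := Finset.mem_erase.mp hxe
            have hxv : x ≠ v := by rintro rfl; exact hvS hxS
            rw [hg, Function.update_of_ne hxu, Function.update_of_ne hxv, hfdef]
            simp [hxS]
        rintro w ⟨hw0, hwx⟩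
        have hwT : w ∉ T := fun h' => hgT1 w h' hw0
        obtain ⟨x, hxT, hxadj⟩ := hTdom w hwT
        exact hgT1 x hxT (hwx x hxadj.symm)
      · rw [Finset.sum_ite_mem, Finset.univ_inter, Finset.sum_const, smul_eq_mul,
          mul_one, hcard]
end
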